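/- arXiv:2211.03574 — 4 statements merged into one kernel-verified Lean document; each statement's English description precedes it below -/
import Mathlib

section
/- Let L > 0. There exists a constant C > 0, depending only on L, such that for every u ∈ C²([0,L]) and every v ∈ C¹([0,L]) with v(L) = 0 one has ∫₀^L (v(x)² + v′(x)²) dx ≤ C [ ∫₀^L (v′(x) + u′(x)²/2)² dx + ( ∫₀^L (u(x)² + u′(x)² + u″(x)²) dx )² ]. -/
open Set MeasureTheory intervalIntegral

set_option maxHeartbeats 2000000

/-- Lemma 1 of the paper: for `u ∈ C²([0,L])` and `v ∈ C¹([0,L])` with `v(L) = 0`,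
the `H¹`-norm of `v` is controlled by `Q(u,v) = ∫ (v′ + u′²/2)²` plus the fourth power
of the `H²`-norm of `u`, with a constant depending only on `L`. -/
theorem stmt_2 (L : ℝ) (hL : 0 < L) :
    ∃ C > (0:ℝ), ∀ u u' u'' v v' : ℝ → ℝ,
      (∀ x ∈ Set.Icc (0:ℝ) L, HasDerivAt u (u' x) x) →
      (∀ x ∈ Set.Icc (0:ℝ) L, HasDerivAt u' (u'' x) x) →
      (∀ x ∈ Set.Icc (0:ℝ) L, HasDerivAt v (v' x) x) →
      ContinuousOn u'' (Set.Icc (0:ℝ) L) →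
      ContinuousOn v' (Set.Icc (0:ℝ) L) →
      v L = 0 →
      (∫ x in (0:ℝ)..L, ((v x) ^ 2 + (v' x) ^ 2)) ≤
        C * ((∫ x in (0:ℝ)..L, (v' x + (u' x) ^ 2 / 2) ^ 2) +
          (∫ x in (0:ℝ)..L, ((u x) ^ 2 + (u' x) ^ 2 + (u'' x) ^ 2)) ^ 2) := by
  refine ⟨(1 + 4*L^2) * (3 + 1/L) + 1, by positivity, ?_⟩
  intro u u' u'' v v' hu hu' hv cu'' cv' hvL
  have hL' : (0:ℝ) ≤ L := hL.le
  have huIcc : Set.uIcc (0:ℝ) L = Set.Icc 0 L := Set.uIcc_of_le hL'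
  -- continuity of everything on [0,L]
  have cu' : ContinuousOn u' (Set.Icc 0 L) := fun x hx =>
    (hu' x hx).continuousAt.continuousWithinAt
  have cu : ContinuousOn u (Set.Icc 0 L) := fun x hx =>
    (hu x hx).continuousAt.continuousWithinAt
  have cv : ContinuousOn v (Set.Icc 0 L) := fun x hx =>
    (hv x hx).continuousAt.continuousWithinAt
  -- integrability helper
  have integ : ∀ f : ℝ → ℝ, ContinuousOn f (Set.Icc 0 L) →
      IntervalIntegrable f volume 0 L := by
    intro f hf
    exact (hf.mono (by rw [huIcc])).intervalIntegrable
  have iu'2 : IntervalIntegrable (fun x => u' x ^ 2) volume 0 L := integ _ (cu'.pow 2)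
  have iu'4 : IntervalIntegrable (fun x => u' x ^ 4) volume 0 L := integ _ (cu'.pow 4)
  have iv2 : IntervalIntegrable (fun x => v x ^ 2) volume 0 L := integ _ (cv.pow 2)
  have iv'2 : IntervalIntegrable (fun x => v' x ^ 2) volume 0 L := integ _ (cv'.pow 2)
  have iQ : IntervalIntegrable (fun x => (v' x + u' x ^ 2 / 2) ^ 2) volume 0 L :=
    integ _ ((cv'.add ((cu'.pow 2).div_const 2)).pow 2)
  have iH : IntervalIntegrable (fun x => u x ^ 2 + u' x ^ 2 + u'' x ^ 2) volume 0 L :=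
    integ _ (((cu.pow 2).add (cu'.pow 2)).add (cu''.pow 2))
  have iB : IntervalIntegrable (fun x => u' x ^ 2 + u'' x ^ 2) volume 0 L :=
    integ _ ((cu'.pow 2).add (cu''.pow 2))
  set Q := ∫ x in (0:ℝ)..L, (v' x + u' x ^ 2 / 2) ^ 2 with hQdef
  set H := ∫ x in (0:ℝ)..L, (u x ^ 2 + u' x ^ 2 + u'' x ^ 2) with hHdef
  set A := ∫ x in (0:ℝ)..L, u' x ^ 2 with hAdef
  set B := ∫ x in (0:ℝ)..L, (u' x ^ 2 + u'' x ^ 2) with hBdef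
  have hQ0 : 0 ≤ Q := intervalIntegral.integral_nonneg hL' (fun x _ => sq_nonneg _)
  have hH0 : 0 ≤ H := intervalIntegral.integral_nonneg hL' (fun x _ => by positivity)
  have hA0 : 0 ≤ A := intervalIntegral.integral_nonneg hL' (fun x _ => sq_nonneg _)
  have hB0 : 0 ≤ B := intervalIntegral.integral_nonneg hL' (fun x _ => by positivity)
  have hAH : A ≤ H := intervalIntegral.integral_mono_on hL' iu'2 iH
    (fun x _ => by nlinarith [sq_nonneg (u x), sq_nonneg (u'' x)])
  have hBH : B ≤ H := intervalIntegral.integral_mono_on hL' iB iH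
    (fun x _ => by nlinarith [sq_nonneg (u x)])
  -- step 1: sup bound for u'^2
  have key : ∀ x ∈ Set.Icc (0:ℝ) L, u' x ^ 2 ≤ (1/L) * A + B := by
    obtain ⟨y, hy, hmin⟩ := isCompact_Icc.exists_isMinOn (Set.nonempty_Icc.2 hL')
      ((cu'.pow 2) : ContinuousOn (fun x => u' x ^ 2) (Set.Icc 0 L))
    have hyA0 : L * u' y ^ 2 ≤ A := by
      have : ∫ x in (0:ℝ)..L, u' y ^ 2 ≤ A :=
        intervalIntegral.integral_mono_on hL' intervalIntegrable_const iu'2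
          (fun x hx => hmin hx)
      simpa [mul_comm] using this
    have hyA : u' y ^ 2 ≤ 1/L * A := by
      rw [div_mul_eq_mul_div, le_div_iff₀ hL]
      linarith [hyA0]
    intro x hx
    -- FTC for (u')^2
    have hderiv : ∀ z ∈ Set.Icc (0:ℝ) L,
        HasDerivAt (fun t => u' t ^ 2) (2 * u' z * u'' z) z := by
      intro z hz
      have := (hu' z hz).fun_pow 2
      simpa [mul_comm, mul_assoc, mul_left_comm] using this
    have i2uu : IntervalIntegrable (fun z => 2 * u' z * u'' z) volume 0 L :=
      integ _ ((continuousOn_const.mul cu').mul cu'')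
    rcases le_total y x with hxy | hxy
    · have hftc : u' x ^ 2 - u' y ^ 2 = ∫ z in y..x, 2 * u' z * u'' z := by
        rw [intervalIntegral.integral_eq_sub_of_hasDerivAt]
        · intro z hz
          exact hderiv z (Set.uIcc_subset_Icc hy hx hz)
        · exact i2uu.mono_set (by rw [huIcc]; exact Set.uIcc_subset_Icc hy hx)
      have h1 : (∫ z in y..x, 2 * u' z * u'' z) ≤ ∫ z in y..x, (u' z ^ 2 + u'' z ^ 2) := by
        apply intervalIntegral.integral_mono_on hxy
          (i2uu.mono_set (by rw [huIcc]; exact Set.uIcc_subset_Icc hy hx))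
          (iB.mono_set (by rw [huIcc]; exact Set.uIcc_subset_Icc hy hx))
        intro z _
        nlinarith [sq_nonneg (u' z - u'' z)]
      have h2 : (∫ z in y..x, (u' z ^ 2 + u'' z ^ 2)) ≤ B := by
        apply intervalIntegral.integral_mono_interval hy.1 hxy hx.2
        · filter_upwards with z using by positivity
        · exact iB
      nlinarith
    · have hftc : u' y ^ 2 - u' x ^ 2 = ∫ z in x..y, 2 * u' z * u'' z := by
        rw [intervalIntegral.integral_eq_sub_of_hasDerivAt]
        · intro z hz
          exact hderiv z (Set.uIcc_subset_Icc hx hy hz)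
        · exact i2uu.mono_set (by rw [huIcc]; exact Set.uIcc_subset_Icc hx hy)
      have h1 : (∫ z in x..y, (-(2 * u' z * u'' z))) ≤ ∫ z in x..y, (u' z ^ 2 + u'' z ^ 2) := by
        apply intervalIntegral.integral_mono_on hxy
          ((integ _ (((continuousOn_const.mul cu').mul cu'').neg)).mono_set
            (by rw [huIcc]; exact Set.uIcc_subset_Icc hx hy))
          (iB.mono_set (by rw [huIcc]; exact Set.uIcc_subset_Icc hx hy))
        intro z _
        simp only [Pi.neg_apply, Pi.mul_apply]
        nlinarith [sq_nonneg (u' z + u'' z)]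
      have h2 : (∫ z in x..y, (u' z ^ 2 + u'' z ^ 2)) ≤ B := by
        apply intervalIntegral.integral_mono_interval hx.1 hxy hy.2
        · filter_upwards with z using by positivity
        · exact iB
      rw [intervalIntegral.integral_neg] at h1
      nlinarith
  -- step 2: ∫ u'^4 ≤ ((1/L)*A + B) * A
  have hu'4 : (∫ x in (0:ℝ)..L, u' x ^ 4) ≤ ((1/L) * A + B) * A := by
    have : (∫ x in (0:ℝ)..L, u' x ^ 4) ≤ ∫ x in (0:ℝ)..L, ((1/L) * A + B) * u' x ^ 2 := by
      apply intervalIntegral.integral_mono_on hL' iu'4 (iu'2.const_mul _)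
      intro x hx
      have h1 := key x hx
      nlinarith [sq_nonneg (u' x)]
    rwa [intervalIntegral.integral_const_mul] at this
  -- step 3: ∫ v'^2 ≤ 2Q + (1/2)∫u'^4
  have hv'2 : (∫ x in (0:ℝ)..L, v' x ^ 2) ≤ 2 * Q + (1/2) * ∫ x in (0:ℝ)..L, u' x ^ 4 := by
    have h1 : (∫ x in (0:ℝ)..L, v' x ^ 2) ≤
        ∫ x in (0:ℝ)..L, (2 * (v' x + u' x ^ 2 / 2) ^ 2 + (1/2) * u' x ^ 4) := by
      apply intervalIntegral.integral_mono_on hL' iv'2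
        ((iQ.const_mul 2).add (iu'4.const_mul (1/2)))
      intro x _
      nlinarith [sq_nonneg (v' x - u' x ^ 2 / 2 + u' x ^2), sq_nonneg (v' x + u' x ^2)]
    rw [intervalIntegral.integral_add (iQ.const_mul 2) (iu'4.const_mul (1/2)),
      intervalIntegral.integral_const_mul, intervalIntegral.integral_const_mul] at h1
    exact h1
  -- step 4: ∫ v^2 ≤ 4 L^2 ∫ v'^2 (integration by parts with weight x)
  have hv2 : (∫ x in (0:ℝ)..L, v x ^ 2) ≤ 4 * L^2 * ∫ x in (0:ℝ)..L, v' x ^ 2 := by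
    have hderiv : ∀ x ∈ Set.uIcc (0:ℝ) L,
        HasDerivAt (fun t => t * v t ^ 2) (v x ^ 2 + x * (2 * v x * v' x)) x := by
      intro x hx
      rw [huIcc] at hx
      have h1 : HasDerivAt (fun t => v t ^ 2) (2 * v x * v' x) x := by
        have := (hv x hx).fun_pow 2
        simpa [mul_comm, mul_assoc, mul_left_comm] using this
      have := (hasDerivAt_id x).fun_mul h1
      simpa [mul_comm, mul_assoc, mul_left_comm] using this
    have imix : IntervalIntegrable (fun x => v x ^ 2 + x * (2 * v x * v' x)) volume 0 L :=
      integ _ ((cv.pow 2).add ((continuousOn_id.mul ((continuousOn_const.mul cv).mul cv'))))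
    have hftc : (∫ x in (0:ℝ)..L, (v x ^ 2 + x * (2 * v x * v' x))) = 0 := by
      rw [intervalIntegral.integral_eq_sub_of_hasDerivAt hderiv imix]
      simp [hvL]
    have isplit : IntervalIntegrable (fun x => x * (2 * v x * v' x)) volume 0 L :=
      integ _ (continuousOn_id.mul ((continuousOn_const.mul cv).mul cv'))
    have heq : (∫ x in (0:ℝ)..L, v x ^ 2) = - ∫ x in (0:ℝ)..L, x * (2 * v x * v' x) := by
      have := intervalIntegral.integral_add iv2 isplit
      rw [hftc] at this  -- wrong direction; fix below
      linarith [this]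
    have hbound : (- ∫ x in (0:ℝ)..L, x * (2 * v x * v' x)) ≤
        ∫ x in (0:ℝ)..L, ((1/2) * v x ^ 2 + 2 * L^2 * v' x ^ 2) := by
      rw [← intervalIntegral.integral_neg]
      apply intervalIntegral.integral_mono_on hL'
        (integ _ ((continuousOn_id.mul ((continuousOn_const.mul cv).mul cv')).neg))
        ((iv2.const_mul _).add (iv'2.const_mul _))
      intro x hx
      have hx1 := hx.1
      have hx2 := hx.2
      simp only [Pi.neg_apply, Pi.mul_apply, id_eq]
      nlinarith [sq_nonneg (v x + 2 * x * v' x), sq_nonneg (v' x),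
        mul_nonneg (mul_nonneg (sub_nonneg.2 hx2) (by linarith : (0:ℝ) ≤ L + x)) (sq_nonneg (v' x))]
    rw [intervalIntegral.integral_add (iv2.const_mul _) (iv'2.const_mul _),
      intervalIntegral.integral_const_mul, intervalIntegral.integral_const_mul] at hbound
    linarith [heq, hbound]
  -- combine
  have hsplit : (∫ x in (0:ℝ)..L, (v x ^ 2 + v' x ^ 2)) =
      (∫ x in (0:ℝ)..L, v x ^ 2) + ∫ x in (0:ℝ)..L, v' x ^ 2 :=
    intervalIntegral.integral_add iv2 iv'2
  have hL2 : (0:ℝ) < 1/L := by positivity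
  have hMA : ((1/L) * A + B) * A ≤ (1/L + 1) * H^2 := by
    have hA2 : A*A ≤ H*H := mul_le_mul hAH hAH hA0 hH0
    have hBA : B*A ≤ H*H := mul_le_mul hBH hAH hA0 hH0
    have h3 : (1/L)*(A*A) ≤ (1/L)*(H*H) := mul_le_mul_of_nonneg_left hA2 hL2.le
    nlinarith [h3, hBA]
  have hu'4' : (∫ x in (0:ℝ)..L, u' x ^ 4) ≤ (1/L + 1) * H^2 := le_trans hu'4 hMA
  have hiv'20 : 0 ≤ ∫ x in (0:ℝ)..L, v' x ^ 2 :=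
    intervalIntegral.integral_nonneg hL' (fun x _ => sq_nonneg _)
  have e1 : 0 ≤ 1/L * Q := mul_nonneg hL2.le hQ0
  have e2 : 0 ≤ 1/L * H^2 := mul_nonneg hL2.le (sq_nonneg H)
  have hC' : (0:ℝ) ≤ 1 + 4*L^2 := by positivity
  rw [hsplit]
  calc (∫ x in (0:ℝ)..L, v x ^ 2) + ∫ x in (0:ℝ)..L, v' x ^ 2
      ≤ (1 + 4*L^2) * ∫ x in (0:ℝ)..L, v' x ^ 2 := by nlinarith [hv2, hiv'20]
    _ ≤ (1 + 4*L^2) * ((3 + 1/L) * (Q + H^2)) := by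
        apply mul_le_mul_of_nonneg_left _ hC'
        nlinarith [hv'2, hu'4', e1, e2, hQ0, sq_nonneg H]
    _ ≤ ((1 + 4*L^2) * (3 + 1/L) + 1) * (Q + H^2) := by
        nlinarith [hQ0, sq_nonneg H]
end

section
/- Let T > 0, 0 < L₀ < L, and β₁, β₂, ρ₁, ρ₂ > 0. Let η ∈ C¹([0,L]) with η(0) = η(L) = 0 and η(L₀) ≤ 0. Let φ, ω : [0,L₀]×[0,T] → ℝ and u, v : [L₀,L]×[0,T] → ℝ be C² functions with φ(L₀,t) = u(L₀,t) and ω(L₀,t) = v(L₀,t) for all t ∈ [0,T]. Then β₁∫₀^T∫₀^{L₀} φ_tt η φ_x dx dt + ρ₁∫₀^T∫₀^{L₀} ω_tt η ω_x dx dt + β₂∫₀^T∫_{L₀}^{L} u_tt η u_x dx dt + ρ₂∫₀^T∫_{L₀}^{L} v_tt η v_x dx dt = (β₁/2)∫₀^T∫₀^{L₀} φ_t² η′ dx dt + (ρ₁/2)∫₀^T∫₀^{L₀} ω_t² η′ dx dt + (β₂/2)∫₀^T∫_{L₀}^{L} u_t² η′ dx dt + (ρ₂/2)∫₀^T∫_{L₀}^{L}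 v_t² η′ dx dt + (β₁ − β₂)(−η(L₀))/2 ∫₀^T u_t(L₀,t)² dt + (ρ₁ − ρ₂)(−η(L₀))/2 ∫₀^T v_t(L₀,t)² dt + [β₁∫₀^{L₀} φ_t η φ_x dx + ρ₁∫₀^{L₀} ω_t η ω_x dx + β₂∫_{L₀}^{L} u_t η u_x dx + ρ₂∫_{L₀}^{L} v_t η v_x dx] evaluated at t = T minus the same expression evaluated at t = 0. -/
open MeasureTheory

/-- Partial derivative in the first (space) variable. -/
noncomputable def pdx (f : ℝ → ℝ → ℝ) : ℝ → ℝ → ℝ := fun x t => deriv (fun y => f y t) x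

/-- Partial derivative in the second (time) variable. -/
noncomputable def pdt (f : ℝ → ℝ → ℝ) : ℝ → ℝ → ℝ := fun x t => deriv (fun s => f x s) t

open Set in
lemma fubini_interval {P : ℝ → ℝ → ℝ} (hP : Continuous (Function.uncurry P))
    {a b c d : ℝ} (hab : a ≤ b) (hcd : c ≤ d) :
    ∫ t in a..b, ∫ x in c..d, P t x = ∫ x in c..d, ∫ t in a..b, P t x := by
  rw [intervalIntegral.integral_of_le hab, intervalIntegral.integral_of_le hcd]
  simp_rw [intervalIntegral.integral_of_le hcd, intervalIntegral.integral_of_le hab]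
  apply MeasureTheory.integral_integral_swap
  rw [Measure.prod_restrict]
  have h1 : IntegrableOn (Function.uncurry P) (Set.Icc a b ×ˢ Set.Icc c d)
      (Measure.prod volume volume) :=
    hP.continuousOn.integrableOn_compact (isCompact_Icc.prod isCompact_Icc)
  exact h1.mono_set (Set.prod_mono Set.Ioc_subset_Icc_self Set.Ioc_subset_Icc_self)

lemma key (f : ℝ → ℝ → ℝ) (hf : ContDiff ℝ 2 (Function.uncurry f))
    (η : ℝ → ℝ) (hη : ContDiff ℝ 1 η) (a b T : ℝ) (hab : a ≤ b) (hT : 0 ≤ T) :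
    ∫ t in (0:ℝ)..T, ∫ x in a..b, pdt (pdt f) x t * η x * pdx f x t
    = (1/2) * (∫ t in (0:ℝ)..T, ∫ x in a..b, (pdt f x t)^2 * deriv η x)
      - (1/2) * (η b * ∫ t in (0:ℝ)..T, (pdt f b t)^2)
      + (1/2) * (η a * ∫ t in (0:ℝ)..T, (pdt f a t)^2)
      + ((∫ x in a..b, pdt f x T * η x * pdx f x T)
        - (∫ x in a..b, pdt f x 0 * η x * pdx f x 0)) := by
  have hfd : Differentiable ℝ (Function.uncurry f) := hf.differentiable (by norm_num)
  set D1 : ℝ × ℝ → (ℝ × ℝ →L[ℝ] ℝ) := fderiv ℝ (Function.uncurry f) with hD1def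
  set D2 : ℝ × ℝ → (ℝ × ℝ →L[ℝ] (ℝ × ℝ →L[ℝ] ℝ)) := fderiv ℝ D1 with hD2def
  have hf' : ContDiff ℝ 1 D1 := hf.fderiv_right (by norm_num)
  have hf'' : Continuous D2 := (hf'.fderiv_right (m := 0) (by norm_num)).continuous
  have hline : ∀ (x t : ℝ), HasDerivAt (fun s : ℝ => ((x : ℝ), s)) ((0 : ℝ), (1 : ℝ)) t :=
    fun x t => HasDerivAt.prodMk (hasDerivAt_const t x) (hasDerivAt_id t)
  have hlinex : ∀ (x t : ℝ), HasDerivAt (fun y : ℝ => (y, (t : ℝ))) ((1 : ℝ), (0 : ℝ)) x :=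
    fun x t => HasDerivAt.prodMk (hasDerivAt_id x) (hasDerivAt_const x t)
  have Ht : ∀ x t, HasDerivAt (fun s => f x s) (D1 (x, t) (0, 1)) t := fun x t => by
    have h := (hfd (x, t)).hasFDerivAt.comp_hasDerivAt t (hline x t)
    simpa [Function.comp_def, Function.uncurry] using h
  have Hx : ∀ x t, HasDerivAt (fun y => f y t) (D1 (x, t) (1, 0)) x := fun x t => by
    have h := (hfd (x, t)).hasFDerivAt.comp_hasDerivAt x (hlinex x t)
    simpa [Function.comp_def, Function.uncurry] using h
  have pdt_eq : ∀ x t, pdt f x t = D1 (x, t) (0, 1) := fun x t => (Ht x t).deriv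
  have pdx_eq : ∀ x t, pdx f x t = D1 (x, t) (1, 0) := fun x t => (Hx x t).deriv
  have hD1at : ∀ p : ℝ × ℝ, HasFDerivAt D1 (D2 p) p :=
    fun p => (hf'.differentiable (by norm_num) p).hasFDerivAt
  have Hvt : ∀ (v : ℝ × ℝ) (x t : ℝ),
      HasDerivAt (fun s => D1 (x, s) v) (D2 (x, t) (0, 1) v) t := fun v x t => by
    have h1 : HasFDerivAt (fun p => D1 p v)
        ((ContinuousLinearMap.apply ℝ ℝ v).comp (D2 (x, t))) (x, t) :=
      (ContinuousLinearMap.apply ℝ ℝ v).hasFDerivAt.comp (x, t) (hD1at (x, t))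
    have h2 := h1.comp_hasDerivAt t (hline x t)
    simpa [Function.comp_def] using h2
  have Hvx : ∀ (v : ℝ × ℝ) (x t : ℝ),
      HasDerivAt (fun y => D1 (y, t) v) (D2 (x, t) (1, 0) v) x := fun v x t => by
    have h1 : HasFDerivAt (fun p => D1 p v)
        ((ContinuousLinearMap.apply ℝ ℝ v).comp (D2 (x, t))) (x, t) :=
      (ContinuousLinearMap.apply ℝ ℝ v).hasFDerivAt.comp (x, t) (hD1at (x, t))
    have h2 := h1.comp_hasDerivAt x (hlinex x t)
    simpa [Function.comp_def] using h2
  have symm : ∀ (x t : ℝ) (v w : ℝ × ℝ), D2 (x, t) v w = D2 (x, t) w v := fun x t v w =>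
    second_derivative_symmetric (fun p => (hfd p).hasFDerivAt) (hD1at (x, t)) v w
  have Htt : ∀ x t, HasDerivAt (fun s => pdt f x s) (D2 (x, t) (0, 1) (0, 1)) t := fun x t => by
    rw [show (fun s => pdt f x s) = fun s => D1 (x, s) (0, 1) from funext fun s => pdt_eq x s]
    exact Hvt (0, 1) x t
  have Hxt : ∀ x t, HasDerivAt (fun s => pdx f x s) (D2 (x, t) (0, 1) (1, 0)) t := fun x t => by
    rw [show (fun s => pdx f x s) = fun s => D1 (x, s) (1, 0) from funext fun s => pdx_eq x s]
    exact Hvt (1, 0) x t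
  have Htx : ∀ x t, HasDerivAt (fun y => pdt f y t) (D2 (x, t) (1, 0) (0, 1)) x := fun x t => by
    rw [show (fun y => pdt f y t) = fun y => D1 (y, t) (0, 1) from funext fun y => pdt_eq y t]
    exact Hvx (0, 1) x t
  have pdtt_eq : ∀ x t, pdt (pdt f) x t = D2 (x, t) (0, 1) (0, 1) := fun x t => (Htt x t).deriv
  have pdxt_eq : ∀ x t, pdx (pdt f) x t = D2 (x, t) (1, 0) (0, 1) := fun x t => (Htx x t).deriv
  -- continuity
  have contη : Continuous η := hη.continuous
  have contη' : Continuous (deriv η) := hη.continuous_deriv le_rfl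
  have hηd : ∀ x, HasDerivAt η (deriv η x) x := fun x =>
    (hη.differentiable (by norm_num) x).hasDerivAt
  have contD2 : ∀ v w : ℝ × ℝ, Continuous (fun p : ℝ × ℝ => D2 p v w) := fun v w =>
    (hf''.clm_apply continuous_const).clm_apply continuous_const
  have contpdt : Continuous (fun p : ℝ × ℝ => pdt f p.1 p.2) := by
    rw [show (fun p : ℝ × ℝ => pdt f p.1 p.2) = fun p => D1 p (0, 1) from
      funext fun p => pdt_eq p.1 p.2]
    exact hf'.continuous.clm_apply continuous_const
  have contpdx : Continuous (fun p : ℝ × ℝ => pdx f p.1 p.2) := by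
    rw [show (fun p : ℝ × ℝ => pdx f p.1 p.2) = fun p => D1 p (1, 0) from
      funext fun p => pdx_eq p.1 p.2]
    exact hf'.continuous.clm_apply continuous_const
  have contpdtt : Continuous (fun p : ℝ × ℝ => pdt (pdt f) p.1 p.2) := by
    rw [show (fun p : ℝ × ℝ => pdt (pdt f) p.1 p.2) = fun p => D2 p (0, 1) (0, 1) from
      funext fun p => pdtt_eq p.1 p.2]
    exact contD2 _ _
  have contpdxt : Continuous (fun p : ℝ × ℝ => pdx (pdt f) p.1 p.2) := by
    rw [show (fun p : ℝ × ℝ => pdx (pdt f) p.1 p.2) = fun p => D2 p (1, 0) (0, 1) from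
      funext fun p => pdxt_eq p.1 p.2]
    exact contD2 _ _
  set H : ℝ → ℝ → ℝ := fun x t => pdt f x t * η x * pdx f x t with hHdef
  set P : ℝ → ℝ → ℝ := fun x t =>
    pdt (pdt f) x t * η x * pdx f x t + pdt f x t * η x * pdx (pdt f) x t with hPdef
  set Q : ℝ → ℝ → ℝ := fun x t => pdt f x t * η x * pdx (pdt f) x t with hQdef
  have contH : Continuous (fun p : ℝ × ℝ => H p.1 p.2) :=
    (contpdt.mul (contη.comp continuous_fst)).mul contpdx
  have contP : Continuous (fun p : ℝ × ℝ => P p.1 p.2) :=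
    ((contpdtt.mul (contη.comp continuous_fst)).mul contpdx).add
      ((contpdt.mul (contη.comp continuous_fst)).mul contpdxt)
  have contQ : Continuous (fun p : ℝ × ℝ => Q p.1 p.2) :=
    (contpdt.mul (contη.comp continuous_fst)).mul contpdxt
  have slicet : ∀ {G : ℝ × ℝ → ℝ}, Continuous G → ∀ x : ℝ, Continuous fun t => G (x, t) :=
    fun hG x => hG.comp (continuous_const.prodMk continuous_id)
  have slicex : ∀ {G : ℝ × ℝ → ℝ}, Continuous G → ∀ t : ℝ, Continuous fun x => G (x, t) :=
    fun hG t => hG.comp (continuous_id.prodMk continuous_const)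
  -- time-derivative of H
  have HderivT : ∀ x t, HasDerivAt (fun s => H x s) (P x t) t := fun x t => by
    convert ((Htt x t).mul_const (η x)).mul (Hxt x t) using 1
    · exact rfl
    · exact rfl
    · exact rfl
    rw [hPdef]
    simp only [pdtt_eq x t, pdxt_eq x t, pdx_eq x t, symm x t (1, 0) (0, 1)]
  -- x-derivative of square
  have Hq : ∀ x t, HasDerivAt (fun y => (pdt f y t) ^ 2)
      (2 * pdt f x t * pdx (pdt f) x t) x := fun x t => by
    have h := (Htx x t).fun_pow 2
    simpa [pdxt_eq x t, mul_comm, mul_assoc, mul_left_comm] using h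
  -- Step A: Fubini + FTC in time
  have stepA : ∫ t in (0:ℝ)..T, ∫ x in a..b, P x t
      = (∫ x in a..b, pdt f x T * η x * pdx f x T)
        - (∫ x in a..b, pdt f x 0 * η x * pdx f x 0) := by
    rw [fubini_interval (P := fun t x => P x t)
      (contP.comp continuous_swap) hT hab]
    rw [show (fun x => ∫ t in (0:ℝ)..T, P x t) = fun x => H x T - H x 0 from
      funext fun x => intervalIntegral.integral_eq_sub_of_hasDerivAt
        (fun t _ => HderivT x t) ((slicet contP x).intervalIntegrable 0 T)]
    exact intervalIntegral.integral_sub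
      ((slicex contH T).intervalIntegrable a b) ((slicex contH 0).intervalIntegrable a b)
  -- Step B: integration by parts in space
  have contq : ∀ t : ℝ, Continuous fun x => (pdt f x t) ^ 2 := fun t => (slicex contpdt t).pow 2
  have contq' : ∀ t : ℝ, Continuous fun x => 2 * pdt f x t * pdx (pdt f) x t := fun t =>
    (continuous_const.mul (slicex contpdt t)).mul (slicex contpdxt t)
  have stepB : ∀ t, ∫ x in a..b, Q x t
      = (1/2) * (η b * (pdt f b t) ^ 2 - η a * (pdt f a t) ^ 2)
        - (1/2) * ∫ x in a..b, (pdt f x t) ^ 2 * deriv η x := fun t => by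
    have ibp := intervalIntegral.integral_deriv_mul_eq_sub (a := a) (b := b)
      (u := η) (v := fun x => (pdt f x t) ^ 2) (u' := deriv η)
      (v' := fun x => 2 * pdt f x t * pdx (pdt f) x t)
      (fun x _ => hηd x) (fun x _ => Hq x t)
      (contη'.intervalIntegrable a b) ((contq' t).intervalIntegrable a b)
    have hsplit : (fun x => Q x t) = fun x =>
        (1/2) * (deriv η x * (pdt f x t) ^ 2 + η x * (2 * pdt f x t * pdx (pdt f) x t))
        - (1/2) * ((pdt f x t) ^ 2 * deriv η x) := by
      funext x; rw [hQdef]; ring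
    rw [hsplit, intervalIntegral.integral_sub
        ((continuous_const.fun_mul ((contη'.fun_mul (contq t)).fun_add
          (contη.fun_mul (contq' t)))).intervalIntegrable a b)
        ((continuous_const.fun_mul ((contq t).fun_mul contη')).intervalIntegrable a b),
      intervalIntegral.integral_const_mul, intervalIntegral.integral_const_mul, ibp]
  -- Step C: combine everything
  have cParP : Continuous fun t => ∫ x in a..b, P x t :=
    intervalIntegral.continuous_parametric_intervalIntegral_of_continuous'
      (f := fun t x => P x t) (contP.comp continuous_swap) a b
  have cParQ : Continuous fun t => ∫ x in a..b, Q x t :=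
    intervalIntegral.continuous_parametric_intervalIntegral_of_continuous'
      (f := fun t x => Q x t) (contQ.comp continuous_swap) a b
  have cParR : Continuous fun t => ∫ x in a..b, (pdt f x t) ^ 2 * deriv η x :=
    intervalIntegral.continuous_parametric_intervalIntegral_of_continuous'
      (f := fun t x => (pdt f x t) ^ 2 * deriv η x)
      (((contpdt.comp continuous_swap).fun_pow 2).fun_mul (contη'.comp continuous_snd)) a b
  have hint_eq : ∀ t, ∫ x in a..b, pdt (pdt f) x t * η x * pdx f x t
      = (∫ x in a..b, P x t) - (∫ x in a..b, Q x t) := fun t => by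
    rw [← intervalIntegral.integral_sub ((slicex contP t).intervalIntegrable a b)
      ((slicex contQ t).intervalIntegrable a b)]
    apply intervalIntegral.integral_congr
    intro x _
    rw [hPdef, hQdef]; ring
  have hQint : ∫ t in (0:ℝ)..T, ∫ x in a..b, Q x t
      = (1/2) * (η b * ∫ t in (0:ℝ)..T, (pdt f b t) ^ 2)
        - (1/2) * (η a * ∫ t in (0:ℝ)..T, (pdt f a t) ^ 2)
        - (1/2) * ∫ t in (0:ℝ)..T, ∫ x in a..b, (pdt f x t) ^ 2 * deriv η x := by
    rw [intervalIntegral.integral_congr (g := fun t =>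
      (1/2) * (η b * (pdt f b t) ^ 2 - η a * (pdt f a t) ^ 2)
      - (1/2) * ∫ x in a..b, (pdt f x t) ^ 2 * deriv η x) (fun t _ => stepB t)]
    rw [intervalIntegral.integral_sub
      ((continuous_const.fun_mul ((continuous_const.fun_mul ((slicet contpdt b).fun_pow 2)).fun_sub
        (continuous_const.fun_mul ((slicet contpdt a).fun_pow 2)))).intervalIntegrable 0 T)
      ((continuous_const.fun_mul cParR).intervalIntegrable 0 T),
      intervalIntegral.integral_const_mul, intervalIntegral.integral_const_mul,
      intervalIntegral.integral_sub
      ((continuous_const.fun_mul ((slicet contpdt b).fun_pow 2)).intervalIntegrable 0 T)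
      ((continuous_const.fun_mul ((slicet contpdt a).fun_pow 2)).intervalIntegrable 0 T),
      intervalIntegral.integral_const_mul, intervalIntegral.integral_const_mul]
    ring
  rw [intervalIntegral.integral_congr (g := fun t =>
      (∫ x in a..b, P x t) - (∫ x in a..b, Q x t)) (fun t _ => hint_eq t),
    intervalIntegral.integral_sub (cParP.intervalIntegrable 0 T)
      (cParQ.intervalIntegrable 0 T), stepA, hQint]
  ring

/-- Multiplier identity for the inertial terms in the proof of asymptotic smoothness
of the transmission beam system. -/
theorem stmt_6 (T L₀ L β₁ β₂ ρ₁ ρ₂ : ℝ)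
    (hT : 0 < T) (hL₀ : 0 < L₀) (hL : L₀ < L)
    (hβ₁ : 0 < β₁) (hβ₂ : 0 < β₂) (hρ₁ : 0 < ρ₁) (hρ₂ : 0 < ρ₂)
    (η : ℝ → ℝ) (hη : ContDiff ℝ 1 η)
    (hη0 : η 0 = 0) (hηL : η L = 0) (hηL₀ : η L₀ ≤ 0)
    (φ ω u v : ℝ → ℝ → ℝ)
    (hφ : ContDiff ℝ 2 (Function.uncurry φ))
    (hω : ContDiff ℝ 2 (Function.uncurry ω))
    (hu : ContDiff ℝ 2 (Function.uncurry u))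
    (hv : ContDiff ℝ 2 (Function.uncurry v))
    (htr1 : ∀ t ∈ Set.Icc (0:ℝ) T, φ L₀ t = u L₀ t)
    (htr2 : ∀ t ∈ Set.Icc (0:ℝ) T, ω L₀ t = v L₀ t)
    (F : ℝ → ℝ)
    (hF : ∀ t : ℝ, F t =
      β₁ * (∫ x in (0:ℝ)..L₀, pdt φ x t * η x * pdx φ x t)
      + ρ₁ * (∫ x in (0:ℝ)..L₀, pdt ω x t * η x * pdx ω x t)
      + β₂ * (∫ x in L₀..L, pdt u x t * η x * pdx u x t)
      + ρ₂ * (∫ x in L₀..L, pdt v x t * η x * pdx v x t)) :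
    β₁ * (∫ t in (0:ℝ)..T, (∫ x in (0:ℝ)..L₀, pdt (pdt φ) x t * η x * pdx φ x t))
      + ρ₁ * (∫ t in (0:ℝ)..T, (∫ x in (0:ℝ)..L₀, pdt (pdt ω) x t * η x * pdx ω x t))
      + β₂ * (∫ t in (0:ℝ)..T, (∫ x in L₀..L, pdt (pdt u) x t * η x * pdx u x t))
      + ρ₂ * (∫ t in (0:ℝ)..T, (∫ x in L₀..L, pdt (pdt v) x t * η x * pdx v x t))
    = (β₁ / 2) * (∫ t in (0:ℝ)..T, (∫ x in (0:ℝ)..L₀, (pdt φ x t) ^ 2 * deriv η x))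
      + (ρ₁ / 2) * (∫ t in (0:ℝ)..T, (∫ x in (0:ℝ)..L₀, (pdt ω x t) ^ 2 * deriv η x))
      + (β₂ / 2) * (∫ t in (0:ℝ)..T, (∫ x in L₀..L, (pdt u x t) ^ 2 * deriv η x))
      + (ρ₂ / 2) * (∫ t in (0:ℝ)..T, (∫ x in L₀..L, (pdt v x t) ^ 2 * deriv η x))
      + (β₁ - β₂) * (-η L₀) / 2 * (∫ t in (0:ℝ)..T, (pdt u L₀ t) ^ 2)
      + (ρ₁ - ρ₂) * (-η L₀) / 2 * (∫ t in (0:ℝ)..T, (pdt v L₀ t) ^ 2)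
      + (F T - F 0) := by
  have hT' : (0:ℝ) ≤ T := hT.le
  have Kφ := key φ hφ η hη 0 L₀ T hL₀.le hT'
  have Kω := key ω hω η hη 0 L₀ T hL₀.le hT'
  have Ku := key u hu η hη L₀ L T hL.le hT'
  have Kv := key v hv η hη L₀ L T hL.le hT'
  have trace : ∀ f g : ℝ → ℝ → ℝ, (∀ t ∈ Set.Icc (0:ℝ) T, f L₀ t = g L₀ t) →
      ∫ t in (0:ℝ)..T, (pdt f L₀ t) ^ 2 = ∫ t in (0:ℝ)..T, (pdt g L₀ t) ^ 2 := by
    intro f g htr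
    apply intervalIntegral.integral_congr_ae
    have hsing : (volume : Measure ℝ) {T} = 0 := measure_singleton T
    filter_upwards [measure_eq_zero_iff_ae_notMem.mp hsing] with t htT htI
    rw [Set.uIoc_of_le hT'] at htI
    have htT' : t ≠ T := by simpa using htT
    have ht : t ∈ Set.Ioo (0:ℝ) T := ⟨htI.1, lt_of_le_of_ne htI.2 htT'⟩
    have heq : (fun s => f L₀ s) =ᶠ[nhds t] fun s => g L₀ s := by
      filter_upwards [Ioo_mem_nhds ht.1 ht.2] with s hs using htr s ⟨hs.1.le, hs.2.le⟩
    have hde : pdt f L₀ t = pdt g L₀ t := heq.deriv_eq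
    rw [hde]
  rw [trace φ u htr1] at Kφ
  rw [trace ω v htr2] at Kω
  rw [Kφ, Kω, Ku, Kv, hF T, hF 0, hη0, hηL]
  ring
end

section
/- Let T > 0, 0 < L₀ < L, and λ₁, λ₂ > 0. Let η ∈ C²([0,L]) with η(0) = η(L) = 0 and η(L₀) ≤ 0. Let φ : [0,L₀]×[0,T] → ℝ and u : [L₀,L]×[0,T] → ℝ be functions that are C³ in x and continuous in t, and assume φ_x(0,t) = 0, u_xx(L,t) = 0, φ_x(L₀,t) = u_x(L₀,t), and λ₁φ_xx(L₀,t) = λ₂u_xx(L₀,t) for all t ∈ [0,T]. Then −λ₁∫₀^T∫₀^{L₀} φ_xxx (η φ_xx + η′ φ_x) dx dt − λ₂∫₀^T∫_{L₀}^{L} u_xxx (η u_xx + η′ u_x) dx dt = (3λ₁/2)∫₀^T∫₀^{L₀} φ_xx² η′ dx dt + (3λ₂/2)∫₀^T∫_{L₀}^{L} u_xx² η′ dx dt + λ₂(λ₂ − λ₁)(−η(L₀))/(2λ₁) ∫₀^T u_xx(L₀,t)² dt + λ₁∫₀^T∫₀^{L₀} φ_xx η″ φ_x dx dt + λ₂∫₀^T∫_{L₀}^{L}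 u_xx η″ u_x dx dt. -/
open MeasureTheory

lemma ibp_aux (η w : ℝ → ℝ) (hη : ContDiff ℝ 2 η) (hw : ContDiff ℝ 3 w) (a b : ℝ) :
    (∫ x in a..b, deriv (deriv (deriv w)) x *
        (η x * deriv (deriv w) x + deriv η x * deriv w x))
    = (η b * (deriv (deriv w) b)^2/2 + deriv η b * deriv (deriv w) b * deriv w b)
      - (η a * (deriv (deriv w) a)^2/2 + deriv η a * deriv (deriv w) a * deriv w a)
      - (3/2) * (∫ x in a..b, (deriv (deriv w) x)^2 * deriv η x)
      - (∫ x in a..b, deriv (deriv w) x * deriv (deriv η) x * deriv w x) := by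
  have hη1 : ContDiff ℝ 1 (deriv η) :=
    (contDiff_succ_iff_deriv.mp (show ContDiff ℝ (1+1) η by norm_num [hη])).2.2
  have hη2c : Continuous (deriv (deriv η)) :=
    (contDiff_one_iff_deriv.mp hη1).2
  have hη1c : Continuous (deriv η) := hη1.continuous
  have hηc : Continuous η := hη.continuous
  have hw1 : ContDiff ℝ 2 (deriv w) :=
    (contDiff_succ_iff_deriv.mp (show ContDiff ℝ (2+1) w by norm_num [hw])).2.2
  have hw2 : ContDiff ℝ 1 (deriv (deriv w)) :=
    (contDiff_succ_iff_deriv.mp (show ContDiff ℝ (1+1) (deriv w) by norm_num [hw1])).2.2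
  have hw3c : Continuous (deriv (deriv (deriv w))) := (contDiff_one_iff_deriv.mp hw2).2
  have hw2c : Continuous (deriv (deriv w)) := hw2.continuous
  have hw1c : Continuous (deriv w) := hw1.continuous
  have hdη : ∀ x, HasDerivAt η (deriv η x) x := fun x =>
    (hη.differentiable (by norm_num) x).hasDerivAt
  have hdη1 : ∀ x, HasDerivAt (deriv η) (deriv (deriv η) x) x := fun x =>
    (hη1.differentiable (by norm_num) x).hasDerivAt
  have hdw1 : ∀ x, HasDerivAt (deriv w) (deriv (deriv w) x) x := fun x =>
    (hw1.differentiable (by norm_num) x).hasDerivAt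
  have hdw2 : ∀ x, HasDerivAt (deriv (deriv w)) (deriv (deriv (deriv w)) x) x := fun x =>
    (hw2.differentiable (by norm_num) x).hasDerivAt
  set F : ℝ → ℝ := fun x => η x * (deriv (deriv w) x)^2/2
      + deriv η x * deriv (deriv w) x * deriv w x with hF
  set G : ℝ → ℝ := fun x =>
      deriv (deriv (deriv w)) x * (η x * deriv (deriv w) x + deriv η x * deriv w x)
      + (3/2) * ((deriv (deriv w) x)^2 * deriv η x)
      + deriv (deriv w) x * deriv (deriv η) x * deriv w x with hG
  have hFd : ∀ x, HasDerivAt F (G x) x := by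
    intro x
    have h1 : HasDerivAt (fun x => η x * (deriv (deriv w) x)^2/2)
        ((deriv η x * (deriv (deriv w) x)^2
          + η x * (2 * deriv (deriv w) x ^ 1 * deriv (deriv (deriv w)) x)) / 2) x :=
      ((hdη x).mul ((hdw2 x).pow 2)).div_const 2
    have h2 : HasDerivAt (fun x => deriv η x * deriv (deriv w) x * deriv w x)
        ((deriv (deriv η) x * deriv (deriv w) x + deriv η x * deriv (deriv (deriv w)) x)
            * deriv w x
          + deriv η x * deriv (deriv w) x * deriv (deriv w) x) x :=
      (((hdη1 x).mul (hdw2 x)).mul (hdw1 x))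
    have := h1.add h2
    refine this.congr_deriv ?_
    simp only [hG]
    ring
  have hGc : Continuous G := by
    simp only [hG]
    fun_prop
  have key : (∫ x in a..b, G x) = F b - F a :=
    intervalIntegral.integral_eq_sub_of_hasDerivAt (fun x _ => hFd x)
      (hGc.intervalIntegrable a b)
  have i1 : IntervalIntegrable (fun x => deriv (deriv (deriv w)) x *
      (η x * deriv (deriv w) x + deriv η x * deriv w x)) volume a b := by
    apply Continuous.intervalIntegrable; fun_prop
  have i2 : IntervalIntegrable (fun x => (3/2 : ℝ) * ((deriv (deriv w) x)^2 * deriv η x))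
      volume a b := by
    apply Continuous.intervalIntegrable; fun_prop
  have i3 : IntervalIntegrable (fun x => deriv (deriv w) x * deriv (deriv η) x * deriv w x)
      volume a b := by
    apply Continuous.intervalIntegrable; fun_prop
  have split : (∫ x in a..b, G x)
      = (∫ x in a..b, deriv (deriv (deriv w)) x *
          (η x * deriv (deriv w) x + deriv η x * deriv w x))
        + (3/2) * (∫ x in a..b, (deriv (deriv w) x)^2 * deriv η x)
        + (∫ x in a..b, deriv (deriv w) x * deriv (deriv η) x * deriv w x) := by
    rw [hG]
    rw [intervalIntegral.integral_add (i1.add i2) i3, intervalIntegral.integral_add i1 i2,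
      intervalIntegral.integral_const_mul]
  rw [split] at key
  simp only [hF] at key
  linarith

/-- Multiplier identity for the bending terms in the proof of asymptotic smoothness
of the transmission beam system; the jump coefficient `λ₂(λ₂ − λ₁)/(2λ₁)` arises from
the transmission condition `λ₁φ_xx(L₀,t) = λ₂u_xx(L₀,t)`. -/
theorem stmt_8 (T L₀ L lam₁ lam₂ : ℝ)
    (hT : 0 < T) (hL₀ : 0 < L₀) (hL : L₀ < L)
    (hlam₁ : 0 < lam₁) (hlam₂ : 0 < lam₂)
    (η : ℝ → ℝ) (hη : ContDiff ℝ 2 η)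
    (hη0 : η 0 = 0) (hηL : η L = 0) (hηL₀ : η L₀ ≤ 0)
    (φ u : ℝ → ℝ → ℝ)
    -- C³ in x
    (hφx : ∀ t : ℝ, ContDiff ℝ 3 (fun x => φ x t))
    (hux : ∀ t : ℝ, ContDiff ℝ 3 (fun x => u x t))
    -- joint continuity of the function and its spatial derivatives up to order 3
    (hφc : Continuous (Function.uncurry φ))
    (hφc1 : Continuous (Function.uncurry (pdx φ)))
    (hφc2 : Continuous (Function.uncurry (pdx (pdx φ))))
    (hφc3 : Continuous (Function.uncurry (pdx (pdx (pdx φ)))))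
    (huc : Continuous (Function.uncurry u))
    (huc1 : Continuous (Function.uncurry (pdx u)))
    (huc2 : Continuous (Function.uncurry (pdx (pdx u))))
    (huc3 : Continuous (Function.uncurry (pdx (pdx (pdx u)))))
    -- boundary and transmission conditions
    (hbc1 : ∀ t ∈ Set.Icc (0:ℝ) T, pdx φ 0 t = 0)
    (hbc2 : ∀ t ∈ Set.Icc (0:ℝ) T, pdx (pdx u) L t = 0)
    (htr1 : ∀ t ∈ Set.Icc (0:ℝ) T, pdx φ L₀ t = pdx u L₀ t)
    (htr2 : ∀ t ∈ Set.Icc (0:ℝ) T, lam₁ * pdx (pdx φ) L₀ t = lam₂ * pdx (pdx u) L₀ t) :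
    -lam₁ * (∫ t in (0:ℝ)..T, (∫ x in (0:ℝ)..L₀,
        pdx (pdx (pdx φ)) x t * (η x * pdx (pdx φ) x t + deriv η x * pdx φ x t)))
      - lam₂ * (∫ t in (0:ℝ)..T, (∫ x in L₀..L,
        pdx (pdx (pdx u)) x t * (η x * pdx (pdx u) x t + deriv η x * pdx u x t)))
    = (3 * lam₁ / 2) * (∫ t in (0:ℝ)..T, (∫ x in (0:ℝ)..L₀,
          (pdx (pdx φ) x t) ^ 2 * deriv η x))
      + (3 * lam₂ / 2) * (∫ t in (0:ℝ)..T, (∫ x in L₀..L,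
          (pdx (pdx u) x t) ^ 2 * deriv η x))
      + lam₂ * (lam₂ - lam₁) * (-η L₀) / (2 * lam₁) *
          (∫ t in (0:ℝ)..T, (pdx (pdx u) L₀ t) ^ 2)
      + lam₁ * (∫ t in (0:ℝ)..T, (∫ x in (0:ℝ)..L₀,
          pdx (pdx φ) x t * deriv (deriv η) x * pdx φ x t))
      + lam₂ * (∫ t in (0:ℝ)..T, (∫ x in L₀..L,
          pdx (pdx u) x t * deriv (deriv η) x * pdx u x t)) := by
  have hη1 : ContDiff ℝ 1 (deriv η) :=
    (contDiff_succ_iff_deriv.mp (show ContDiff ℝ (1+1) η by norm_num [hη])).2.2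
  have hη2c : Continuous (deriv (deriv η)) := (contDiff_one_iff_deriv.mp hη1).2
  have hη1c : Continuous (deriv η) := hη1.continuous
  have hηc : Continuous η := hη.continuous
  -- swapped-variable joint continuity
  have sφ1 : Continuous fun p : ℝ × ℝ => pdx φ p.2 p.1 :=
    hφc1.comp (continuous_snd.prodMk continuous_fst)
  have sφ2 : Continuous fun p : ℝ × ℝ => pdx (pdx φ) p.2 p.1 :=
    hφc2.comp (continuous_snd.prodMk continuous_fst)
  have sφ3 : Continuous fun p : ℝ × ℝ => pdx (pdx (pdx φ)) p.2 p.1 :=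
    hφc3.comp (continuous_snd.prodMk continuous_fst)
  have su1 : Continuous fun p : ℝ × ℝ => pdx u p.2 p.1 :=
    huc1.comp (continuous_snd.prodMk continuous_fst)
  have su2 : Continuous fun p : ℝ × ℝ => pdx (pdx u) p.2 p.1 :=
    huc2.comp (continuous_snd.prodMk continuous_fst)
  have su3 : Continuous fun p : ℝ × ℝ => pdx (pdx (pdx u)) p.2 p.1 :=
    huc3.comp (continuous_snd.prodMk continuous_fst)
  -- names for the inner integrals
  set Pφ : ℝ → ℝ := fun t => ∫ x in (0:ℝ)..L₀,
      pdx (pdx (pdx φ)) x t * (η x * pdx (pdx φ) x t + deriv η x * pdx φ x t) with hPφ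
  set Pu : ℝ → ℝ := fun t => ∫ x in L₀..L,
      pdx (pdx (pdx u)) x t * (η x * pdx (pdx u) x t + deriv η x * pdx u x t) with hPu
  set Aφ : ℝ → ℝ := fun t => ∫ x in (0:ℝ)..L₀, (pdx (pdx φ) x t) ^ 2 * deriv η x with hAφ
  set Au : ℝ → ℝ := fun t => ∫ x in L₀..L, (pdx (pdx u) x t) ^ 2 * deriv η x with hAu
  set B : ℝ → ℝ := fun t => (pdx (pdx u) L₀ t) ^ 2 with hB
  set Cφ : ℝ → ℝ := fun t => ∫ x in (0:ℝ)..L₀,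
      pdx (pdx φ) x t * deriv (deriv η) x * pdx φ x t with hCφ
  set Cu : ℝ → ℝ := fun t => ∫ x in L₀..L,
      pdx (pdx u) x t * deriv (deriv η) x * pdx u x t with hCu
  -- continuity in t of all inner integrals
  have cPφ : Continuous Pφ := by
    rw [hPφ]
    apply intervalIntegral.continuous_parametric_intervalIntegral_of_continuous' (μ := volume)
    exact sφ3.mul (((hηc.comp continuous_snd).mul sφ2).add
      ((hη1c.comp continuous_snd).mul sφ1))
  have cPu : Continuous Pu := by
    rw [hPu]
    apply intervalIntegral.continuous_parametric_intervalIntegral_of_continuous' (μ := volume)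
    exact su3.mul (((hηc.comp continuous_snd).mul su2).add
      ((hη1c.comp continuous_snd).mul su1))
  have cAφ : Continuous Aφ := by
    rw [hAφ]
    apply intervalIntegral.continuous_parametric_intervalIntegral_of_continuous' (μ := volume)
    exact (sφ2.pow 2).mul (hη1c.comp continuous_snd)
  have cAu : Continuous Au := by
    rw [hAu]
    apply intervalIntegral.continuous_parametric_intervalIntegral_of_continuous' (μ := volume)
    exact (su2.pow 2).mul (hη1c.comp continuous_snd)
  have cB : Continuous B := by
    rw [hB]
    exact (huc2.comp (continuous_const.prodMk continuous_id)).pow 2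
  have cCφ : Continuous Cφ := by
    rw [hCφ]
    apply intervalIntegral.continuous_parametric_intervalIntegral_of_continuous' (μ := volume)
    exact (sφ2.mul (hη2c.comp continuous_snd)).mul sφ1
  have cCu : Continuous Cu := by
    rw [hCu]
    apply intervalIntegral.continuous_parametric_intervalIntegral_of_continuous' (μ := volume)
    exact (su2.mul (hη2c.comp continuous_snd)).mul su1
  -- pointwise-in-t identity
  have keyt : ∀ t ∈ Set.Icc (0:ℝ) T,
      -lam₁ * Pφ t - lam₂ * Pu t
      = (3 * lam₁ / 2) * Aφ t + (3 * lam₂ / 2) * Au t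
        + lam₂ * (lam₂ - lam₁) * (-η L₀) / (2 * lam₁) * B t
        + lam₁ * Cφ t + lam₂ * Cu t := by
    intro t ht
    have e1 : Pφ t
        = (η L₀ * (pdx (pdx φ) L₀ t)^2/2 + deriv η L₀ * pdx (pdx φ) L₀ t * pdx φ L₀ t)
          - (η 0 * (pdx (pdx φ) 0 t)^2/2 + deriv η 0 * pdx (pdx φ) 0 t * pdx φ 0 t)
          - (3/2) * Aφ t - Cφ t :=
      ibp_aux η (fun x => φ x t) hη (hφx t) 0 L₀
    have e2 : Pu t
        = (η L * (pdx (pdx u) L t)^2/2 + deriv η L * pdx (pdx u) L t * pdx u L t)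
          - (η L₀ * (pdx (pdx u) L₀ t)^2/2 + deriv η L₀ * pdx (pdx u) L₀ t * pdx u L₀ t)
          - (3/2) * Au t - Cu t :=
      ibp_aux η (fun x => u x t) hη (hux t) L₀ L
    rw [e1, e2, hη0, hηL, hbc1 t ht, hbc2 t ht, htr1 t ht]
    have htr := htr2 t ht
    have hl : lam₁ ≠ 0 := ne_of_gt hlam₁
    have ha : pdx (pdx φ) L₀ t = lam₂ * pdx (pdx u) L₀ t / lam₁ := by
      field_simp
      linarith
    rw [ha, hB]
    field_simp
    ring
  -- integrability in t
  have iPφ : IntervalIntegrable Pφ volume 0 T := cPφ.intervalIntegrable 0 T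
  have iPu : IntervalIntegrable Pu volume 0 T := cPu.intervalIntegrable 0 T
  have iAφ : IntervalIntegrable Aφ volume 0 T := cAφ.intervalIntegrable 0 T
  have iAu : IntervalIntegrable Au volume 0 T := cAu.intervalIntegrable 0 T
  have iB : IntervalIntegrable B volume 0 T := cB.intervalIntegrable 0 T
  have iCφ : IntervalIntegrable Cφ volume 0 T := cCφ.intervalIntegrable 0 T
  have iCu : IntervalIntegrable Cu volume 0 T := cCu.intervalIntegrable 0 T
  have L_eq : (∫ t in (0:ℝ)..T, (-lam₁ * Pφ t - lam₂ * Pu t))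
      = -lam₁ * (∫ t in (0:ℝ)..T, Pφ t) - lam₂ * (∫ t in (0:ℝ)..T, Pu t) := by
    rw [intervalIntegral.integral_sub ((iPφ.const_mul (-lam₁))) (iPu.const_mul lam₂),
      intervalIntegral.integral_const_mul, intervalIntegral.integral_const_mul]
  have R_eq : (∫ t in (0:ℝ)..T,
      ((3 * lam₁ / 2) * Aφ t + (3 * lam₂ / 2) * Au t
        + lam₂ * (lam₂ - lam₁) * (-η L₀) / (2 * lam₁) * B t
        + lam₁ * Cφ t + lam₂ * Cu t))
      = (3 * lam₁ / 2) * (∫ t in (0:ℝ)..T, Aφ t)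
        + (3 * lam₂ / 2) * (∫ t in (0:ℝ)..T, Au t)
        + lam₂ * (lam₂ - lam₁) * (-η L₀) / (2 * lam₁) * (∫ t in (0:ℝ)..T, B t)
        + lam₁ * (∫ t in (0:ℝ)..T, Cφ t)
        + lam₂ * (∫ t in (0:ℝ)..T, Cu t) := by
    rw [intervalIntegral.integral_add
        ((((iAφ.const_mul _).add (iAu.const_mul _)).add (iB.const_mul _)).add
          (iCφ.const_mul _)) (iCu.const_mul _),
      intervalIntegral.integral_add
        (((iAφ.const_mul _).add (iAu.const_mul _)).add (iB.const_mul _)) (iCφ.const_mul _),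
      intervalIntegral.integral_add
        ((iAφ.const_mul _).add (iAu.const_mul _)) (iB.const_mul _),
      intervalIntegral.integral_add (iAφ.const_mul _) (iAu.const_mul _),
      intervalIntegral.integral_const_mul, intervalIntegral.integral_const_mul,
      intervalIntegral.integral_const_mul, intervalIntegral.integral_const_mul,
      intervalIntegral.integral_const_mul]
  show -lam₁ * (∫ t in (0:ℝ)..T, Pφ t) - lam₂ * (∫ t in (0:ℝ)..T, Pu t)
    = (3 * lam₁ / 2) * (∫ t in (0:ℝ)..T, Aφ t)
      + (3 * lam₂ / 2) * (∫ t in (0:ℝ)..T, Au t)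
      + lam₂ * (lam₂ - lam₁) * (-η L₀) / (2 * lam₁) * (∫ t in (0:ℝ)..T, B t)
      + lam₁ * (∫ t in (0:ℝ)..T, Cφ t)
      + lam₂ * (∫ t in (0:ℝ)..T, Cu t)
  rw [← L_eq, ← R_eq]
  apply intervalIntegral.integral_congr
  intro t ht
  exact keyt t (by rwa [Set.uIcc_of_le hT.le] at ht)
end

section
/- Fix 0 < L₀ < L and positive constants λ₁, λ₂, and let g₁ ∈ C([0,L₀]), g₃ ∈ C([L₀,L]). Let φ, ω : [0,L₀] → ℝ and u, v : [L₀,L] → ℝ be smooth functions satisfying the stationary transmission system: λ₁φ⁗ − [φ′(ω′ + φ′²/2)]′ = g₁ and (ω′ + φ′²/2)′ = 0 on (0,L₀); λ₂u⁗ − [u′(v′ + u′²/2)]′ = g₃ and (v′ + u′²/2)′ = 0 on (L₀,L); with boundary conditions φ(0) = φ′(0) = ω(0) = 0, u(L) = u″(L) = v(L) = 0 and transmission conditions φ(L₀) = u(L₀), ω(L₀) = v(L₀), φ′(L₀) = u′(L₀), λ₁φ″(L₀) = λ₂u″(L₀), ω′(L₀) = v′(L₀), λ₁φ‴(L₀)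 = λ₂u‴(L₀). Then there exists a constant C > 0, depending only on λ₁, λ₂, L₀, L, such that λ₁∫₀^{L₀} φ″² dx + λ₂∫_{L₀}^{L} u″² dx + ∫₀^{L₀} (ω′ + φ′²/2)² dx + ∫_{L₀}^{L} (v′ + u′²/2)² dx ≤ C (G + G²), where G = ∫₀^{L₀} g₁² dx + ∫_{L₀}^{L} g₃² dx. In particular, the set of stationary points of the transmission beam system with g₂ = g₄ = 0 is bounded in the energy norm. -/
open MeasureTheory intervalIntegral Set

lemma my_cs {a b : ℝ} (hab : a ≤ b) {f g : ℝ → ℝ}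
    (hf : ContinuousOn f (Set.Icc a b)) (hg : ContinuousOn g (Set.Icc a b)) :
    ∫ x in a..b, f x * g x ≤
      Real.sqrt (∫ x in a..b, f x ^ 2) * Real.sqrt (∫ x in a..b, g x ^ 2) := by
  have huicc : Set.uIcc a b = Set.Icc a b := Set.uIcc_of_le hab
  have hfi : IntervalIntegrable (fun x => f x ^ 2) volume a b :=
    ((hf.pow 2).mono (by rw [huicc])).intervalIntegrable
  have hgi : IntervalIntegrable (fun x => g x ^ 2) volume a b :=
    ((hg.pow 2).mono (by rw [huicc])).intervalIntegrable
  have hfgi : IntervalIntegrable (fun x => f x * g x) volume a b :=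
    ((hf.mul hg).mono (by rw [huicc])).intervalIntegrable
  set F := ∫ x in a..b, f x ^ 2 with hF
  set G := ∫ x in a..b, g x ^ 2 with hG
  set M := ∫ x in a..b, f x * g x with hM
  have hFnn : 0 ≤ F := intervalIntegral.integral_nonneg hab (fun x _ => sq_nonneg _)
  have hGnn : 0 ≤ G := intervalIntegral.integral_nonneg hab (fun x _ => sq_nonneg _)
  have quad : ∀ t : ℝ, 0 ≤ F * (t * t) + (2 * M) * t + G := by
    intro t
    have h1 : ∀ x, 0 ≤ (t * f x + g x) ^ 2 := fun x => sq_nonneg _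
    have h2 : (∫ x in a..b, (t * f x + g x) ^ 2) = F * (t * t) + (2 * M) * t + G := by
      have : (fun x => (t * f x + g x) ^ 2)
          = fun x => (t * t) * f x ^ 2 + (2 * t) * (f x * g x) + g x ^ 2 := by
        funext x; ring
      rw [this]
      rw [intervalIntegral.integral_add (((hfi.const_mul _).add (hfgi.const_mul _)))
        hgi, intervalIntegral.integral_add (hfi.const_mul _) (hfgi.const_mul _),
        intervalIntegral.integral_const_mul, intervalIntegral.integral_const_mul]
      ring
    rw [← h2]
    exact intervalIntegral.integral_nonneg hab (fun x _ => h1 x)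
  have hdisc := discrim_le_zero quad
  rw [discrim] at hdisc
  have hMsq : M ^ 2 ≤ F * G := by nlinarith
  calc M ≤ |M| := le_abs_self M
    _ = Real.sqrt (M ^ 2) := (Real.sqrt_sq_eq_abs M).symm
    _ ≤ Real.sqrt (F * G) := Real.sqrt_le_sqrt hMsq
    _ = Real.sqrt F * Real.sqrt G := Real.sqrt_mul hFnn G

lemma my_const {a b : ℝ} (hab : a ≤ b) {h : ℝ → ℝ} (hd : Differentiable ℝ h)
    (h0 : ∀ x ∈ Set.Ioo a b, deriv h x = 0) :
    ∀ x ∈ Set.Icc a b, h x = h b := by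
  have hc : ContinuousOn h (Set.Icc a b) := hd.continuous.continuousOn
  have hdiff : DifferentiableOn ℝ h (interior (Set.Icc a b)) :=
    hd.differentiableOn
  have hmono : MonotoneOn h (Set.Icc a b) :=
    monotoneOn_of_deriv_nonneg (convex_Icc a b) hc hdiff
      (fun x hx => by rw [h0 x (by rwa [interior_Icc] at hx)])
  have hanti : AntitoneOn h (Set.Icc a b) :=
    antitoneOn_of_deriv_nonpos (convex_Icc a b) hc hdiff
      (fun x hx => by rw [h0 x (by rwa [interior_Icc] at hx)])
  intro x hx
  have hb : b ∈ Set.Icc a b := Set.right_mem_Icc.mpr hab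
  exact le_antisymm (hmono hx hb hx.2) (hanti hx hb hx.2)

lemma my_smooth_iter {f : ℝ → ℝ} (hf : ∀ n : ℕ, ContDiff ℝ n f) (k : ℕ) :
    ContDiff ℝ (⊤ : ℕ∞) (iteratedDeriv k f) := by
  rw [iteratedDeriv_eq_iterate]
  exact ContDiff.iterate_deriv k (contDiff_infty.mpr hf)

lemma my_deriv_id {f : ℝ → ℝ} (k : ℕ) :
    deriv (iteratedDeriv k f) = iteratedDeriv (k + 1) f := (iteratedDeriv_succ).symm
open MeasureTheory intervalIntegral Set

lemma my_diff {f : ℝ → ℝ} (hf : ContDiff ℝ (⊤ : ℕ∞) f) : Differentiable ℝ f :=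
  hf.differentiable (by simp)

lemma my_cderiv {f : ℝ → ℝ} (hf : ContDiff ℝ (⊤ : ℕ∞) f) : Continuous (deriv f) :=
  hf.continuous_deriv (by exact_mod_cast le_top)

lemma my_ftc {f : ℝ → ℝ} (hf : ContDiff ℝ (⊤ : ℕ∞) f) (a b : ℝ) :
    ∫ x in a..b, deriv f x = f b - f a :=
  integral_eq_sub_of_hasDerivAt
    (fun x _ => ((my_diff hf) x).hasDerivAt)
    ((my_cderiv hf).intervalIntegrable a b)

lemma my_ptbound {a b : ℝ} (hab : a ≤ b) {f : ℝ → ℝ} (hf : ContDiff ℝ (⊤ : ℕ∞) f)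
    {x : ℝ} (hx : x ∈ Set.Icc a b) :
    |f x - f a| ≤ Real.sqrt (b - a) * Real.sqrt (∫ t in a..b, deriv f t ^ 2) := by
  have h1 : f x - f a = ∫ t in a..x, deriv f t := (my_ftc hf a x).symm
  have habs : |∫ t in a..x, deriv f t| ≤ ∫ t in a..x, |deriv f t| :=
    intervalIntegral.abs_integral_le_integral_abs hx.1
  have hmono : (∫ t in a..x, |deriv f t|) ≤ ∫ t in a..b, |deriv f t| := by
    exact intervalIntegral.integral_mono_interval le_rfl hx.1 hx.2
      (Filter.Eventually.of_forall (fun t => abs_nonneg _))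
      ((my_cderiv hf).abs.intervalIntegrable a b)
  have hcs : (∫ t in a..b, |deriv f t|) ≤
      Real.sqrt (b - a) * Real.sqrt (∫ t in a..b, deriv f t ^ 2) := by
    have := my_cs hab (f := fun _ => (1:ℝ)) (g := fun t => |deriv f t|)
      continuousOn_const ((my_cderiv hf).abs.continuousOn)
    have e1 : (∫ t in a..b, (1:ℝ) * |deriv f t|) = ∫ t in a..b, |deriv f t| := by
      simp
    have e2 : (∫ t in a..b, (1:ℝ) ^ 2) = b - a := by simp
    have e3 : (∫ t in a..b, |deriv f t| ^ 2) = ∫ t in a..b, deriv f t ^ 2 := by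
      apply intervalIntegral.integral_congr; intro t _; exact sq_abs _
    rw [e1, e2, e3] at this
    exact this
  rw [h1]
  exact habs.trans (hmono.trans hcs)

lemma my_ptbound2 {a b M : ℝ} (hab : a ≤ b) {f : ℝ → ℝ} (hf : ContDiff ℝ (⊤ : ℕ∞) f)
    (hM : ∀ t ∈ Set.Icc a b, |deriv f t| ≤ M)
    {x : ℝ} (hx : x ∈ Set.Icc a b) :
    |f x - f a| ≤ (b - a) * M := by
  have hM0 : 0 ≤ M := (abs_nonneg _).trans (hM a (Set.left_mem_Icc.mpr hab))
  have h1 : f x - f a = ∫ t in a..x, deriv f t := (my_ftc hf a x).symm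
  have habs : |∫ t in a..x, deriv f t| ≤ ∫ t in a..x, |deriv f t| :=
    intervalIntegral.abs_integral_le_integral_abs hx.1
  have h2 : (∫ t in a..x, |deriv f t|) ≤ ∫ t in a..x, M := by
    apply intervalIntegral.integral_mono_on hx.1
    · exact ((my_cderiv hf).abs.intervalIntegrable a x)
    · exact intervalIntegrable_const
    · intro t ht; exact hM t ⟨ht.1, ht.2.trans hx.2⟩
  have h3 : (∫ t in a..x, M) = (x - a) * M := by simp [mul_comm]
  have h4 : (x - a) * M ≤ (b - a) * M := by
    apply mul_le_mul_of_nonneg_right _ hM0; linarith [hx.2]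
  rw [h1]; exact habs.trans (h2.trans (h3 ▸ h4))

lemma my_l2bound {a b M : ℝ} (hab : a ≤ b) {f : ℝ → ℝ} (hfc : ContinuousOn f (Set.Icc a b))
    (hM : ∀ t ∈ Set.Icc a b, |f t| ≤ M) :
    (∫ t in a..b, f t ^ 2) ≤ (b - a) * M ^ 2 := by
  have : (∫ t in a..b, f t ^ 2) ≤ ∫ t in a..b, M ^ 2 := by
    apply intervalIntegral.integral_mono_on hab
    · exact ((hfc.pow 2).mono (by rw [Set.uIcc_of_le hab])).intervalIntegrable
    · exact intervalIntegrable_const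
    · intro t ht
      have := hM t ht
      calc f t ^ 2 = |f t| ^ 2 := (sq_abs _).symm
        _ ≤ M ^ 2 := by apply pow_le_pow_left₀ (abs_nonneg _) this
  simpa [mul_comm] using this
open MeasureTheory intervalIntegral Set

-- smoothness of deriv
lemma my_sm1 {f : ℝ → ℝ} (hf : ∀ n : ℕ, ContDiff ℝ n f) : ContDiff ℝ (⊤ : ℕ∞) (deriv f) := by
  have := my_smooth_iter hf 1; rwa [iteratedDeriv_one] at this

lemma my_dd {f : ℝ → ℝ} : deriv (deriv f) = iteratedDeriv 2 f := by
  rw [iteratedDeriv_succ, iteratedDeriv_one]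

-- HasDerivAt for iterated derivatives of a smooth function
lemma my_hd {f : ℝ → ℝ} (hf : ∀ n : ℕ, ContDiff ℝ n f) (k : ℕ) (x : ℝ) :
    HasDerivAt (iteratedDeriv k f) (iteratedDeriv (k + 1) f x) x := by
  have h := ((my_diff (my_smooth_iter hf k)) x).hasDerivAt
  rwa [show deriv (iteratedDeriv k f) x = iteratedDeriv (k+1) f x from
    (congrFun iteratedDeriv_succ x).symm] at h

lemma my_hd0 {f : ℝ → ℝ} (hf : ∀ n : ℕ, ContDiff ℝ n f) (x : ℝ) :
    HasDerivAt f (deriv f x) x := ((my_diff (contDiff_infty.mpr hf)) x).hasDerivAt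

lemma my_hd1 {f : ℝ → ℝ} (hf : ∀ n : ℕ, ContDiff ℝ n f) (x : ℝ) :
    HasDerivAt (deriv f) (iteratedDeriv 2 f x) x := by
  have h := ((my_diff (my_sm1 hf)) x).hasDerivAt
  rwa [my_dd] at h

-- constancy of the constraint quantity
lemma my_sigma {a b : ℝ} (hab : a ≤ b) {f h : ℝ → ℝ}
    (hf : ∀ n : ℕ, ContDiff ℝ n f) (hh : ∀ n : ℕ, ContDiff ℝ n h)
    (hd : ∀ x ∈ Set.Ioo a b, deriv (fun y => deriv h y + (deriv f y) ^ 2 / 2) x = 0) :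
    ∀ x ∈ Set.Icc a b, deriv h x + (deriv f x) ^ 2 / 2 = deriv h b + (deriv f b) ^ 2 / 2 := by
  have hdiff : Differentiable ℝ (fun y => deriv h y + (deriv f y) ^ 2 / 2) :=
    (my_diff (my_sm1 hh)).add (((my_diff (my_sm1 hf)).pow 2).div_const 2)
  have := my_const hab hdiff hd
  intro x hx
  exact this x hx

-- reduction of the PDE using the constraint
lemma my_reduce {lam σ : ℝ} {f h g : ℝ → ℝ} {x : ℝ}
    (hf : ∀ n : ℕ, ContDiff ℝ n f) (hh : ∀ n : ℕ, ContDiff ℝ n h)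
    (heq : lam * iteratedDeriv 4 f x
      - deriv (fun y => deriv f y * (deriv h y + (deriv f y) ^ 2 / 2)) x = g x)
    (hval : deriv h x + (deriv f x) ^ 2 / 2 = σ)
    (hd : deriv (fun y => deriv h y + (deriv f y) ^ 2 / 2) x = 0) :
    lam * iteratedDeriv 4 f x - σ * iteratedDeriv 2 f x = g x := by
  have hdiff : Differentiable ℝ (fun y => deriv h y + (deriv f y) ^ 2 / 2) :=
    (my_diff (my_sm1 hh)).add (((my_diff (my_sm1 hf)).pow 2).div_const 2)
  have hin : HasDerivAt (fun y => deriv h y + (deriv f y) ^ 2 / 2) 0 x := by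
    have := ((hdiff) x).hasDerivAt; rwa [hd] at this
  have hprod : deriv (fun y => deriv f y * (deriv h y + (deriv f y) ^ 2 / 2)) x
      = iteratedDeriv 2 f x * (deriv h x + (deriv f x) ^ 2 / 2) + deriv f x * 0 :=
    ((my_hd1 hf x).mul hin).deriv
  rw [hprod, hval] at heq
  linarith [heq]

-- FTC for the constraint quantity
lemma my_constraint_int {a b : ℝ} {f h : ℝ → ℝ}
    (hf : ∀ n : ℕ, ContDiff ℝ n f) (hh : ∀ n : ℕ, ContDiff ℝ n h) :
    (∫ x in a..b, (deriv h x + (deriv f x) ^ 2 / 2))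
      = (h b - h a) + (∫ x in a..b, (deriv f x) ^ 2) / 2 := by
  have c1f : Continuous (deriv f) := my_cderiv (contDiff_infty.mpr hf)
  have c1h : Continuous (deriv h) := my_cderiv (contDiff_infty.mpr hh)
  rw [intervalIntegral.integral_add (c1h.intervalIntegrable a b)
    (((show Continuous (fun x => deriv f x ^ 2) from c1f.pow 2).div_const 2).intervalIntegrable a b),
    my_ftc (contDiff_infty.mpr hh) a b, intervalIntegral.integral_div]

-- the energy identity on one interval
lemma my_energy {a b lam σ : ℝ} (hab : a ≤ b) {f g : ℝ → ℝ}
    (hf : ∀ n : ℕ, ContDiff ℝ n f)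
    (heq : ∀ x ∈ Set.Ioo a b, lam * iteratedDeriv 4 f x - σ * iteratedDeriv 2 f x = g x) :
    ∫ x in a..b, g x * f x
      = ((lam * (iteratedDeriv 3 f b * f b - iteratedDeriv 2 f b * deriv f b)
            - σ * (deriv f b * f b))
        - (lam * (iteratedDeriv 3 f a * f a - iteratedDeriv 2 f a * deriv f a)
            - σ * (deriv f a * f a)))
        + lam * (∫ x in a..b, (iteratedDeriv 2 f x) ^ 2)
        + σ * (∫ x in a..b, (deriv f x) ^ 2) := by
  have c0 : Continuous f := (contDiff_infty.mpr hf).continuous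
  have c1 : Continuous (deriv f) := my_cderiv (contDiff_infty.mpr hf)
  have c2 : Continuous (iteratedDeriv 2 f) := (my_smooth_iter hf 2).continuous
  have c3 : Continuous (iteratedDeriv 3 f) := (my_smooth_iter hf 3).continuous
  have c4 : Continuous (iteratedDeriv 4 f) := (my_smooth_iter hf 4).continuous
  -- the derivative of the boundary functional
  have hW : ∀ x : ℝ, HasDerivAt
      (fun y => lam * (iteratedDeriv 3 f y * f y - iteratedDeriv 2 f y * deriv f y)
        - σ * (deriv f y * f y))
      (lam * ((iteratedDeriv 4 f x * f x + iteratedDeriv 3 f x * deriv f x)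
          - (iteratedDeriv 3 f x * deriv f x + iteratedDeriv 2 f x * iteratedDeriv 2 f x))
        - σ * (iteratedDeriv 2 f x * f x + deriv f x * deriv f x)) x := by
    intro x
    exact ((((my_hd hf 3 x).mul (my_hd0 hf x)).sub
      ((my_hd hf 2 x).mul (my_hd1 hf x))).const_mul lam).sub
      (((my_hd1 hf x).mul (my_hd0 hf x)).const_mul σ)
  have cw : Continuous (fun x =>
      lam * ((iteratedDeriv 4 f x * f x + iteratedDeriv 3 f x * deriv f x)
          - (iteratedDeriv 3 f x * deriv f x + iteratedDeriv 2 f x * iteratedDeriv 2 f x))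
        - σ * (iteratedDeriv 2 f x * f x + deriv f x * deriv f x)) :=
    (continuous_const.mul (((c4.mul c0).add (c3.mul c1)).sub
      ((c3.mul c1).add (c2.mul c2)))).sub
      (continuous_const.mul ((c2.mul c0).add (c1.mul c1)))
  have ftc : (∫ x in a..b,
      (lam * ((iteratedDeriv 4 f x * f x + iteratedDeriv 3 f x * deriv f x)
          - (iteratedDeriv 3 f x * deriv f x + iteratedDeriv 2 f x * iteratedDeriv 2 f x))
        - σ * (iteratedDeriv 2 f x * f x + deriv f x * deriv f x)))
      = (lam * (iteratedDeriv 3 f b * f b - iteratedDeriv 2 f b * deriv f b)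
            - σ * (deriv f b * f b))
        - (lam * (iteratedDeriv 3 f a * f a - iteratedDeriv 2 f a * deriv f a)
            - σ * (deriv f a * f a)) :=
    integral_eq_sub_of_hasDerivAt (fun x _ => hW x) (cw.intervalIntegrable a b)
  -- pointwise identity on the open interval
  have hpt : ∀ᵐ x ∂(volume : Measure ℝ), x ∈ Set.uIoc a b →
      g x * f x =
      (lam * ((iteratedDeriv 4 f x * f x + iteratedDeriv 3 f x * deriv f x)
          - (iteratedDeriv 3 f x * deriv f x + iteratedDeriv 2 f x * iteratedDeriv 2 f x))
        - σ * (iteratedDeriv 2 f x * f x + deriv f x * deriv f x))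
      + (lam * (iteratedDeriv 2 f x) ^ 2 + σ * (deriv f x) ^ 2) := by
    have hb : ∀ᵐ x ∂(volume : Measure ℝ), x ≠ b := by
      have : (volume : Measure ℝ) {b} = 0 := measure_singleton b
      exact MeasureTheory.measure_eq_zero_iff_ae_notMem.mp this
    filter_upwards [hb] with x hxb hx
    rw [Set.uIoc_of_le hab] at hx
    have hxo : x ∈ Set.Ioo a b := ⟨hx.1, lt_of_le_of_ne hx.2 hxb⟩
    have := heq x hxo
    rw [← this]; ring
  have congr := intervalIntegral.integral_congr_ae hpt
  rw [congr, intervalIntegral.integral_add (cw.intervalIntegrable a b)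
    ((show Continuous (fun x => lam * iteratedDeriv 2 f x ^ 2 + σ * deriv f x ^ 2) from (continuous_const.mul (c2.pow 2)).add
      (continuous_const.mul (c1.pow 2))).intervalIntegrable a b),
    intervalIntegral.integral_add ((show Continuous (fun x => lam * iteratedDeriv 2 f x ^ 2) from continuous_const.mul (c2.pow 2)).intervalIntegrable a b)
      ((show Continuous (fun x => σ * deriv f x ^ 2) from continuous_const.mul (c1.pow 2)).intervalIntegrable a b),
    intervalIntegral.integral_const_mul, intervalIntegral.integral_const_mul, ftc]
  ring
open MeasureTheory

/-- Boundedness of the set of stationary points of the transmission beam system with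
`g₂ = g₄ = 0`: the potential part of the energy of any stationary solution is bounded by
`C(G + G²)` where `G` collects the `L²`-norms of the forcings. -/
theorem stmt_19 (L₀ L lam₁ lam₂ : ℝ)
    (hL₀ : 0 < L₀) (hL : L₀ < L) (hlam₁ : 0 < lam₁) (hlam₂ : 0 < lam₂) :
    ∃ C > (0:ℝ), ∀ g₁ g₃ : ℝ → ℝ,
      ContinuousOn g₁ (Set.Icc 0 L₀) → ContinuousOn g₃ (Set.Icc L₀ L) →
      ∀ φ ω u v : ℝ → ℝ,
        (∀ n : ℕ, ContDiff ℝ n φ) → (∀ n : ℕ, ContDiff ℝ n ω) →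
        (∀ n : ℕ, ContDiff ℝ n u) → (∀ n : ℕ, ContDiff ℝ n v) →
        -- stationary equations on (0, L₀)
        (∀ x ∈ Set.Ioo (0:ℝ) L₀,
          lam₁ * iteratedDeriv 4 φ x
            - deriv (fun y => deriv φ y * (deriv ω y + (deriv φ y) ^ 2 / 2)) x = g₁ x) →
        (∀ x ∈ Set.Ioo (0:ℝ) L₀,
          deriv (fun y => deriv ω y + (deriv φ y) ^ 2 / 2) x = 0) →
        -- stationary equations on (L₀, L)
        (∀ x ∈ Set.Ioo L₀ L,
          lam₂ * iteratedDeriv 4 u x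
            - deriv (fun y => deriv u y * (deriv v y + (deriv u y) ^ 2 / 2)) x = g₃ x) →
        (∀ x ∈ Set.Ioo L₀ L,
          deriv (fun y => deriv v y + (deriv u y) ^ 2 / 2) x = 0) →
        -- boundary conditions
        φ 0 = 0 → deriv φ 0 = 0 → ω 0 = 0 →
        u L = 0 → iteratedDeriv 2 u L = 0 → v L = 0 →
        -- transmission conditions
        φ L₀ = u L₀ → ω L₀ = v L₀ → deriv φ L₀ = deriv u L₀ →
        lam₁ * iteratedDeriv 2 φ L₀ = lam₂ * iteratedDeriv 2 u L₀ →
        deriv ω L₀ = deriv v L₀ →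
        lam₁ * iteratedDeriv 3 φ L₀ = lam₂ * iteratedDeriv 3 u L₀ →
        lam₁ * (∫ x in (0:ℝ)..L₀, (iteratedDeriv 2 φ x) ^ 2)
          + lam₂ * (∫ x in L₀..L, (iteratedDeriv 2 u x) ^ 2)
          + (∫ x in (0:ℝ)..L₀, (deriv ω x + (deriv φ x) ^ 2 / 2) ^ 2)
          + (∫ x in L₀..L, (deriv v x + (deriv u x) ^ 2 / 2) ^ 2)
        ≤ C * (((∫ x in (0:ℝ)..L₀, (g₁ x) ^ 2) + (∫ x in L₀..L, (g₃ x) ^ 2))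
            + ((∫ x in (0:ℝ)..L₀, (g₁ x) ^ 2) + (∫ x in L₀..L, (g₃ x) ^ 2)) ^ 2) := by
  have hL0 : (0:ℝ) < L := hL₀.trans hL
  have hLL : (0:ℝ) ≤ L - L₀ := by linarith
  set s1 : ℝ := Real.sqrt L₀ with hs1def
  set s2 : ℝ := Real.sqrt (L - L₀) with hs2def
  clear_value s1 s2
  have hs10 : 0 ≤ s1 := by rw [hs1def]; exact Real.sqrt_nonneg _
  have hs20 : 0 ≤ s2 := by rw [hs2def]; exact Real.sqrt_nonneg _
  set α : ℝ := s1 * L₀ * s1 + (s2 * L₀ * s1 + s2 * (L - L₀) * s1) with hαdef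
  set β : ℝ := s2 * (L - L₀) * s2 with hβdef
  have hα0 : 0 ≤ α := by
    have h1 : 0 ≤ s1 * L₀ * s1 := mul_nonneg (mul_nonneg hs10 hL₀.le) hs10
    have h2 : 0 ≤ s2 * L₀ * s1 := mul_nonneg (mul_nonneg hs20 hL₀.le) hs10
    have h3 : 0 ≤ s2 * (L - L₀) * s1 := mul_nonneg (mul_nonneg hs20 hLL) hs10
    rw [hαdef]; linarith
  have hβ0 : 0 ≤ β := by
    rw [hβdef]; exact mul_nonneg (mul_nonneg hs20 hLL) hs20
  clear_value α β
  set K : ℝ := max α β + 1 with hKdef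
  have hK0 : 0 < K := by
    have : 0 ≤ max α β := le_trans hα0 (le_max_left _ _)
    rw [hKdef]; linarith
  have hαK : α ≤ K := by rw [hKdef]; linarith [le_max_left α β]
  have hβK : β ≤ K := by rw [hKdef]; linarith [le_max_right α β]
  clear_value K
  set m : ℝ := min lam₁ lam₂ with hmdef
  have hm0 : 0 < m := lt_min hlam₁ hlam₂
  have hm1 : m ≤ lam₁ := min_le_left _ _
  have hm2 : m ≤ lam₂ := min_le_right _ _
  clear_value m
  set D : ℝ := 2 * K ^ 2 / m with hDdef
  clear_value D
  have hD0 : 0 < D := by rw [hDdef]; exact div_pos (by positivity) hm0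
  refine ⟨D + 1, by linarith, ?_⟩
  intro g₁ g₃ hg₁c hg₃c φ ω u v hφ hω hu hv eq1 eq2 eq3 eq4 hφ0 hdφ0 hω0 huL hu2L hvL
    t1 t2 t3 t4 t5 t6
  -- the constraint quantity is a single constant σ on both intervals
  set σ : ℝ := deriv ω L₀ + (deriv φ L₀) ^ 2 / 2 with hσdef
  have hc1 : ∀ x ∈ Set.Icc (0:ℝ) L₀, deriv ω x + (deriv φ x) ^ 2 / 2 = σ :=
    my_sigma hL₀.le hφ hω eq2
  have hc2' := my_sigma hL.le hu hv eq4
  have hτσ : deriv v L + (deriv u L) ^ 2 / 2 = σ := by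
    have h := hc2' L₀ ⟨le_rfl, hL.le⟩
    rw [hσdef, t5, t3, h]
  have hc2 : ∀ x ∈ Set.Icc L₀ L, deriv v x + (deriv u x) ^ 2 / 2 = σ :=
    fun x hx => (hc2' x hx).trans hτσ
  clear_value σ
  -- reduced equations
  have r1 : ∀ x ∈ Set.Ioo (0:ℝ) L₀,
      lam₁ * iteratedDeriv 4 φ x - σ * iteratedDeriv 2 φ x = g₁ x :=
    fun x hx => my_reduce hφ hω (eq1 x hx) (hc1 x (Set.Ioo_subset_Icc_self hx)) (eq2 x hx)
  have r2 : ∀ x ∈ Set.Ioo L₀ L,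
      lam₂ * iteratedDeriv 4 u x - σ * iteratedDeriv 2 u x = g₃ x :=
    fun x hx => my_reduce hu hv (eq3 x hx) (hc2 x (Set.Ioo_subset_Icc_self hx)) (eq4 x hx)
  -- names for the integrals
  set A : ℝ := ∫ x in (0:ℝ)..L₀, (iteratedDeriv 2 φ x) ^ 2 with hA
  set B : ℝ := ∫ x in L₀..L, (iteratedDeriv 2 u x) ^ 2 with hB
  set P₁ : ℝ := ∫ x in (0:ℝ)..L₀, (deriv φ x) ^ 2 with hP₁
  set P₂ : ℝ := ∫ x in L₀..L, (deriv u x) ^ 2 with hP₂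
  set G₁ : ℝ := ∫ x in (0:ℝ)..L₀, (g₁ x) ^ 2 with hG₁
  set G₃ : ℝ := ∫ x in L₀..L, (g₃ x) ^ 2 with hG₃
  set I₁ : ℝ := ∫ x in (0:ℝ)..L₀, g₁ x * φ x with hI₁
  set I₂ : ℝ := ∫ x in L₀..L, g₃ x * u x with hI₂
  clear_value A B P₁ P₂ G₁ G₃ I₁ I₂
  have hA0 : 0 ≤ A := hA ▸ intervalIntegral.integral_nonneg hL₀.le (fun x _ => sq_nonneg _)
  have hB0 : 0 ≤ B := hB ▸ intervalIntegral.integral_nonneg hL.le (fun x _ => sq_nonneg _)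
  have hP₁0 : 0 ≤ P₁ := hP₁ ▸ intervalIntegral.integral_nonneg hL₀.le (fun x _ => sq_nonneg _)
  have hP₂0 : 0 ≤ P₂ := hP₂ ▸ intervalIntegral.integral_nonneg hL.le (fun x _ => sq_nonneg _)
  have hG₁0 : 0 ≤ G₁ := hG₁ ▸ intervalIntegral.integral_nonneg hL₀.le (fun x _ => sq_nonneg _)
  have hG₃0 : 0 ≤ G₃ := hG₃ ▸ intervalIntegral.integral_nonneg hL.le (fun x _ => sq_nonneg _)
  -- energy identities
  have E1 := my_energy hL₀.le hφ r1
  have E2 := my_energy hL.le hu r2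
  rw [← hA, ← hP₁, ← hI₁] at E1
  rw [← hB, ← hP₂, ← hI₂] at E2
  have E1' : I₁ = (lam₁ * (iteratedDeriv 3 φ L₀ * φ L₀ - iteratedDeriv 2 φ L₀ * deriv φ L₀)
      - σ * (deriv φ L₀ * φ L₀)) + lam₁ * A + σ * P₁ := by
    rw [E1, hφ0, hdφ0]; ring
  have E2' : I₂ = -(lam₂ * (iteratedDeriv 3 u L₀ * u L₀ - iteratedDeriv 2 u L₀ * deriv u L₀)
      - σ * (deriv u L₀ * u L₀)) + lam₂ * B + σ * P₂ := by
    rw [E2, huL, hu2L]; ring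
  have hbd : lam₁ * (iteratedDeriv 3 φ L₀ * φ L₀ - iteratedDeriv 2 φ L₀ * deriv φ L₀)
      - σ * (deriv φ L₀ * φ L₀)
      = lam₂ * (iteratedDeriv 3 u L₀ * u L₀ - iteratedDeriv 2 u L₀ * deriv u L₀)
      - σ * (deriv u L₀ * u L₀) := by
    rw [t1, t3]
    linear_combination u L₀ * t6 - deriv u L₀ * t4
  have hIden : lam₁ * A + lam₂ * B + σ * (P₁ + P₂) = I₁ + I₂ := by
    rw [E1', E2', hbd]; ring
  -- the value of σ
  have S1 : σ * L₀ = ω L₀ + P₁ / 2 := by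
    have h1 : (∫ x in (0:ℝ)..L₀, (deriv ω x + (deriv φ x) ^ 2 / 2)) = σ * L₀ := by
      rw [intervalIntegral.integral_congr (g := fun _ => σ)
        (fun x hx => hc1 x (by rwa [Set.uIcc_of_le hL₀.le] at hx))]
      simp only [intervalIntegral.integral_const, smul_eq_mul, sub_zero]; ring
    have h2 := my_constraint_int (a := (0:ℝ)) (b := L₀) hφ hω
    rw [← hP₁] at h2  -- might fail if shapes differ; fallback below
    rw [h1] at h2
    rw [h2, hω0]; ring
  have S2 : σ * (L - L₀) = -v L₀ + P₂ / 2 := by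
    have h1 : (∫ x in L₀..L, (deriv v x + (deriv u x) ^ 2 / 2)) = σ * (L - L₀) := by
      rw [intervalIntegral.integral_congr (g := fun _ => σ)
        (fun x hx => hc2 x (by rwa [Set.uIcc_of_le hL.le] at hx))]
      simp only [intervalIntegral.integral_const, smul_eq_mul]; ring
    have h2 := my_constraint_int (a := L₀) (b := L) hu hv
    rw [← hP₂] at h2
    rw [h1] at h2
    rw [h2, hvL]; ring
  have hPsum : P₁ + P₂ = 2 * L * σ := by
    linear_combination (-2) * S1 + (-2) * S2 + (-2) * t2
  have hσ0 : 0 ≤ σ := by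
    rcases le_or_gt 0 σ with h | h
    · exact h
    · exfalso
      have h2 : 2 * L * σ < 0 := mul_neg_of_pos_of_neg (by linarith) h
      linarith [hPsum, hP₁0, hP₂0]
  -- the constraint terms of the energy
  have Q1 : (∫ x in (0:ℝ)..L₀, (deriv ω x + (deriv φ x) ^ 2 / 2) ^ 2) = σ ^ 2 * L₀ := by
    rw [intervalIntegral.integral_congr (g := fun _ => σ ^ 2)
      (fun x hx => by rw [hc1 x (by rwa [Set.uIcc_of_le hL₀.le] at hx)])]
    simp only [intervalIntegral.integral_const, smul_eq_mul, sub_zero]; ring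
  have Q2 : (∫ x in L₀..L, (deriv v x + (deriv u x) ^ 2 / 2) ^ 2) = σ ^ 2 * (L - L₀) := by
    rw [intervalIntegral.integral_congr (g := fun _ => σ ^ 2)
      (fun x hx => by rw [hc2 x (by rwa [Set.uIcc_of_le hL.le] at hx)])]
    simp only [intervalIntegral.integral_const, smul_eq_mul]; ring
  -- pointwise bounds
  set sA : ℝ := Real.sqrt A with hsA
  set sB : ℝ := Real.sqrt B with hsB
  clear_value sA sB
  have hsA0 : 0 ≤ sA := by rw [hsA]; exact Real.sqrt_nonneg _
  have hsB0 : 0 ≤ sB := by rw [hsB]; exact Real.sqrt_nonneg _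
  have c0φ : Continuous φ := (contDiff_infty.mpr hφ).continuous
  have c0u : Continuous u := (contDiff_infty.mpr hu).continuous
  have hdφbd : ∀ x ∈ Set.Icc (0:ℝ) L₀, |deriv φ x| ≤ s1 * sA := by
    intro x hx
    have h := my_ptbound hL₀.le (my_sm1 hφ) hx
    rw [hdφ0, sub_zero, sub_zero, my_dd] at h
    rw [← hA] at h
    rw [hs1def, hsA]
    exact h
  have hφbd : ∀ x ∈ Set.Icc (0:ℝ) L₀, |φ x| ≤ L₀ * (s1 * sA) := by
    intro x hx
    have h := my_ptbound2 hL₀.le (contDiff_infty.mpr hφ) hdφbd hx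
    rw [hφ0, sub_zero, sub_zero] at h
    exact h
  have hdubd : ∀ x ∈ Set.Icc L₀ L, |deriv u x| ≤ s1 * sA + s2 * sB := by
    intro x hx
    have h := my_ptbound hL.le (my_sm1 hu) hx
    rw [my_dd] at h
    rw [← hB, ← hs2def, ← hsB] at h
    have h0 : |deriv u L₀| ≤ s1 * sA := by
      rw [← t3]; exact hdφbd L₀ ⟨hL₀.le, le_rfl⟩
    calc |deriv u x| = |deriv u L₀ + (deriv u x - deriv u L₀)| := by ring_nf
      _ ≤ |deriv u L₀| + |deriv u x - deriv u L₀| := abs_add_le _ _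
      _ ≤ s1 * sA + s2 * sB := add_le_add h0 h
  have hubd : ∀ x ∈ Set.Icc L₀ L, |u x| ≤ L₀ * (s1 * sA) + (L - L₀) * (s1 * sA + s2 * sB) := by
    intro x hx
    have h := my_ptbound2 hL.le (contDiff_infty.mpr hu) hdubd hx
    have h0 : |u L₀| ≤ L₀ * (s1 * sA) := by
      rw [← t1]; exact hφbd L₀ ⟨hL₀.le, le_rfl⟩
    calc |u x| = |u L₀ + (u x - u L₀)| := by ring_nf
      _ ≤ |u L₀| + |u x - u L₀| := abs_add_le _ _
      _ ≤ L₀ * (s1 * sA) + (L - L₀) * (s1 * sA + s2 * sB) := add_le_add h0 h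
  -- Cauchy-Schwarz bounds for the work of the forces
  have hMφ0 : 0 ≤ L₀ * (s1 * sA) := mul_nonneg hL₀.le (mul_nonneg hs10 hsA0)
  have hMu0 : 0 ≤ L₀ * (s1 * sA) + (L - L₀) * (s1 * sA + s2 * sB) :=
    add_nonneg hMφ0 (mul_nonneg hLL (add_nonneg (mul_nonneg hs10 hsA0)
      (mul_nonneg hs20 hsB0)))
  have hI₁bd : I₁ ≤ Real.sqrt G₁ * (s1 * (L₀ * (s1 * sA))) := by
    have hcs := my_cs hL₀.le hg₁c c0φ.continuousOn
    rw [← hG₁, ← hI₁] at hcs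
    have hl2 := my_l2bound hL₀.le c0φ.continuousOn hφbd
    have h3 : Real.sqrt (∫ x in (0:ℝ)..L₀, φ x ^ 2) ≤ s1 * (L₀ * (s1 * sA)) := by
      calc Real.sqrt (∫ x in (0:ℝ)..L₀, φ x ^ 2)
          ≤ Real.sqrt ((L₀ - 0) * (L₀ * (s1 * sA)) ^ 2) := Real.sqrt_le_sqrt hl2
        _ = s1 * (L₀ * (s1 * sA)) := by
            rw [sub_zero, Real.sqrt_mul hL₀.le, Real.sqrt_sq hMφ0, hs1def]
    calc I₁ ≤ Real.sqrt G₁ * Real.sqrt (∫ x in (0:ℝ)..L₀, φ x ^ 2) := hcs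
      _ ≤ Real.sqrt G₁ * (s1 * (L₀ * (s1 * sA))) :=
          mul_le_mul_of_nonneg_left h3 (Real.sqrt_nonneg _)
  have hI₂bd : I₂ ≤ Real.sqrt G₃ *
      (s2 * (L₀ * (s1 * sA) + (L - L₀) * (s1 * sA + s2 * sB))) := by
    have hcs := my_cs hL.le hg₃c c0u.continuousOn
    rw [← hG₃, ← hI₂] at hcs
    have hl2 := my_l2bound hL.le c0u.continuousOn hubd
    have h3 : Real.sqrt (∫ x in L₀..L, u x ^ 2)
        ≤ s2 * (L₀ * (s1 * sA) + (L - L₀) * (s1 * sA + s2 * sB)) := by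
      calc Real.sqrt (∫ x in L₀..L, u x ^ 2)
          ≤ Real.sqrt ((L - L₀) * (L₀ * (s1 * sA) + (L - L₀) * (s1 * sA + s2 * sB)) ^ 2) :=
            Real.sqrt_le_sqrt hl2
        _ = s2 * (L₀ * (s1 * sA) + (L - L₀) * (s1 * sA + s2 * sB)) := by
            rw [Real.sqrt_mul hLL, Real.sqrt_sq hMu0, hs2def]
    calc I₂ ≤ Real.sqrt G₃ * Real.sqrt (∫ x in L₀..L, u x ^ 2) := hcs
      _ ≤ _ := mul_le_mul_of_nonneg_left h3 (Real.sqrt_nonneg _)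
  set sG : ℝ := Real.sqrt (G₁ + G₃) with hsG
  clear_value sG
  have hsG0 : 0 ≤ sG := by rw [hsG]; exact Real.sqrt_nonneg _
  have hsG1 : Real.sqrt G₁ ≤ sG := by rw [hsG]; exact Real.sqrt_le_sqrt (by linarith)
  have hsG3 : Real.sqrt G₃ ≤ sG := by rw [hsG]; exact Real.sqrt_le_sqrt (by linarith)
  have hIsum : I₁ + I₂ ≤ sG * (α * sA + β * sB) := by
    have hX0 : 0 ≤ s1 * (L₀ * (s1 * sA)) := mul_nonneg hs10 hMφ0
    have hY0 : 0 ≤ s2 * (L₀ * (s1 * sA) + (L - L₀) * (s1 * sA + s2 * sB)) :=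
      mul_nonneg hs20 hMu0
    have h1 : I₁ ≤ sG * (s1 * (L₀ * (s1 * sA))) :=
      hI₁bd.trans (mul_le_mul_of_nonneg_right hsG1 hX0)
    have h2 : I₂ ≤ sG * (s2 * (L₀ * (s1 * sA) + (L - L₀) * (s1 * sA + s2 * sB))) :=
      hI₂bd.trans (mul_le_mul_of_nonneg_right hsG3 hY0)
    have : sG * (s1 * (L₀ * (s1 * sA)))
        + sG * (s2 * (L₀ * (s1 * sA) + (L - L₀) * (s1 * sA + s2 * sB)))
        = sG * (α * sA + β * sB) := by rw [hαdef, hβdef]; ring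
    linarith
  -- bootstrap
  have hAsq : A = sA ^ 2 := by rw [hsA]; exact (Real.sq_sqrt hA0).symm
  have hBsq : B = sB ^ 2 := by rw [hsB]; exact (Real.sq_sqrt hB0).symm
  have hGsq : G₁ + G₃ = sG ^ 2 := by rw [hsG]; exact (Real.sq_sqrt (by linarith)).symm
  clear E1 E2 E1' E2' hbd r1 r2 eq1 eq2 eq3 eq4 hc1 hc2 hc2' hτσ S1 S2
  have key1 : lam₁ * A + lam₂ * B ≤ I₁ + I₂ := by
    linarith [hIden, mul_nonneg hσ0 (add_nonneg hP₁0 hP₂0)]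
  have key1' : lam₁ * sA ^ 2 + lam₂ * sB ^ 2 ≤ I₁ + I₂ := by
    rw [hAsq, hBsq] at key1; exact key1
  have key2 : I₁ + I₂ ≤ sG * K * (sA + sB) := by
    have h : α * sA + β * sB ≤ K * (sA + sB) := by
      linarith [mul_le_mul_of_nonneg_right hαK hsA0, mul_le_mul_of_nonneg_right hβK hsB0]
    calc I₁ + I₂ ≤ sG * (α * sA + β * sB) := hIsum
      _ ≤ sG * (K * (sA + sB)) := mul_le_mul_of_nonneg_left h hsG0
      _ = sG * K * (sA + sB) := by ring
  have key4 : m * (sA + sB) ^ 2 ≤ 2 * (sG * K * (sA + sB)) := by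
    linarith [key1', key2, mul_nonneg hm0.le (sq_nonneg (sA - sB)),
      mul_le_mul_of_nonneg_right hm1 (sq_nonneg sA),
      mul_le_mul_of_nonneg_right hm2 (sq_nonneg sB)]
  have keyI : I₁ + I₂ ≤ D * sG ^ 2 := by
    by_cases hs : sA + sB ≤ 0
    · have hsz : sA + sB = 0 := le_antisymm hs (by linarith)
      have : I₁ + I₂ ≤ 0 := by
        calc I₁ + I₂ ≤ sG * K * (sA + sB) := key2
          _ = 0 := by rw [hsz]; ring
      have : 0 ≤ D * sG ^ 2 := mul_nonneg hD0.le (sq_nonneg _)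
      linarith
    · push_neg at hs
      have hms : m * (sA + sB) ≤ 2 * (sG * K) := by
        have h' : m * (sA + sB) * (sA + sB) ≤ 2 * (sG * K) * (sA + sB) := by
          linarith [key4]
        exact le_of_mul_le_mul_right h' hs
      have hdiv : sA + sB ≤ 2 * (sG * K) / m := by
        rw [le_div_iff₀ hm0]; linarith
      calc I₁ + I₂ ≤ sG * K * (sA + sB) := key2
        _ ≤ sG * K * (2 * (sG * K) / m) := by
            apply mul_le_mul_of_nonneg_left hdiv (mul_nonneg hsG0 hK0.le)
        _ = D * sG ^ 2 := by rw [hDdef]; field_simp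
  -- conclusion
  rw [Q1, Q2]
  have hσP : σ * (P₁ + P₂) = 2 * L * σ ^ 2 := by rw [hPsum]; ring
  have hLσ : 0 ≤ L * σ ^ 2 := mul_nonneg hL0.le (sq_nonneg σ)
  have hfin : lam₁ * A + lam₂ * B + σ ^ 2 * L₀ + σ ^ 2 * (L - L₀) ≤ I₁ + I₂ := by
    linarith [hIden, hσP, hLσ]
  have hG0 : 0 ≤ G₁ + G₃ := by linarith
  have hDG : D * sG ^ 2 = D * (G₁ + G₃) := by rw [hGsq]
  have hfin2 : lam₁ * A + lam₂ * B + σ ^ 2 * L₀ + σ ^ 2 * (L - L₀) ≤ D * (G₁ + G₃) := by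
    linarith [hfin, keyI, hDG]
  have hlast : D * (G₁ + G₃) ≤ (D + 1) * ((G₁ + G₃) + (G₁ + G₃) ^ 2) := by
    linarith [hG0, mul_nonneg (by linarith : (0:ℝ) ≤ D + 1) (sq_nonneg (G₁ + G₃))]
  linarith [hfin2, hlast]
end
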